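/- arXiv:1608.08484 — 8 statements merged into one kernel-verified Lean document; each statement's English description precedes it below -/
import Mathlib

section
/- Let p̄ be the payment vector defined by p̄_j = c_j(1 - x̂_j) for j < s, p̄_j = 0 for j > s, and p̄_s = (c_s/π_s)(x* - Σ_{j<s} π_j - Σ_{j≥s} π_j x̂_j), where s is the critical item. Then p̄ is an optimal solution of problem (P2): for every feasible payment vector p one has Σ_i p_i ≥ Σ_i p̄_i. -/
open Finset

/-- The payment vector `p̄` defined via the critical item `s` is an
optimal solution of problem (P2): every feasible payment vector `p` satisfies
`∑ i, p̄ i ≤ ∑ i, p i`. -/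
theorem pbar_optimal
    (n : ℕ) (hn : 1 ≤ n)
    (π c xh : Fin n → ℝ) (xstar : ℝ)
    (hπpos : ∀ i, 0 < π i) (hπsum : ∑ i, π i = 1)
    (hcpos : ∀ i, 0 < c i)
    (hxh : ∀ i, 0 ≤ xh i ∧ xh i ≤ 1)
    (hxstar_lt : ∑ i, π i * xh i < xstar) (hxstar_le : xstar ≤ 1)
    (hord : ∀ i j : Fin n, i ≤ j → π j / c j ≤ π i / c i)
    (s : Fin n)
    (hs : IsLeast {j : Fin n |
      xstar ≤ ∑ i ∈ Finset.Iic j, π i + ∑ i ∈ Finset.Ioi j, π i * xh i} s)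
    (pbar : Fin n → ℝ)
    (hpbar : ∀ j, pbar j =
      if j < s then c j * (1 - xh j)
      else if j = s then
        (c s / π s) *
          (xstar - ∑ i ∈ Finset.Iio s, π i - ∑ i ∈ Finset.Ici s, π i * xh i)
      else 0) :
    ∀ p : Fin n → ℝ,
      (∀ i, 0 ≤ p i) →
      (∀ i, xh i + p i / c i ≤ 1) →
      xstar ≤ ∑ i, π i * (xh i + p i / c i) →
      ∑ i, pbar i ≤ ∑ i, p i := by
  intro p hp0 hp1 hpc
  have hcne : ∀ i, c i ≠ 0 := fun i => (hcpos i).ne'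
  have hπne : ∀ i, π i ≠ 0 := fun i => (hπpos i).ne'
  set K : ℝ := c s / π s with hKdef
  have hK0 : 0 ≤ K := le_of_lt (div_pos (hcpos s) (hπpos s))
  -- generic splitting of sums at s
  have hsplit : ∀ f : Fin n → ℝ,
      ∑ i, f i = ∑ i ∈ Iio s, f i + f s + ∑ i ∈ Ioi s, f i := by
    intro f
    have h1 : (Iio s) ∪ (Ici s) = (univ : Finset (Fin n)) := by
      ext x; simp [lt_or_ge]
    have h2 : Ici s = insert s (Ioi s) := by
      ext x; simp [le_iff_lt_or_eq, or_comm, eq_comm]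
    rw [← h1, Finset.sum_union (by simp [Finset.disjoint_left]), h2,
      Finset.sum_insert (by simp)]
    ring
  have hXs : ∀ Y : ℝ, π s * (K * Y / c s) = Y := by
    intro Y; rw [hKdef]
    field_simp
    rw [div_eq_iff (mul_pos (hπpos s) (hcpos s)).ne']
    ring
  -- the key identity: ∑ π (xh + pbar/c) = xstar
  have hid : ∑ i, π i * (xh i + pbar i / c i) = xstar := by
    rw [hsplit (fun i => π i * (xh i + pbar i / c i))]
    have hIio : ∑ i ∈ Iio s, π i * (xh i + pbar i / c i) = ∑ i ∈ Iio s, π i := by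
      apply Finset.sum_congr rfl
      intro i hi
      rw [hpbar i, if_pos (Finset.mem_Iio.mp hi),
        mul_div_cancel_left₀ _ (hcne i)]
      ring
    have hIoi : ∑ i ∈ Ioi s, π i * (xh i + pbar i / c i)
        = ∑ i ∈ Ioi s, π i * xh i := by
      apply Finset.sum_congr rfl
      intro i hi
      have hgt : s < i := Finset.mem_Ioi.mp hi
      rw [hpbar i, if_neg (asymm hgt), if_neg hgt.ne']
      simp
    have hIci : ∑ i ∈ Ici s, π i * xh i
        = π s * xh s + ∑ i ∈ Ioi s, π i * xh i := by
      have h2 : Ici s = insert s (Ioi s) := by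
        ext x; simp [le_iff_lt_or_eq, or_comm, eq_comm]
      rw [h2, Finset.sum_insert (by simp)]
    have hmid : π s * (xh s + pbar s / c s)
        = π s * xh s + (xstar - ∑ i ∈ Iio s, π i - ∑ i ∈ Ici s, π i * xh i) := by
      rw [hpbar s, if_neg (lt_irrefl s), if_pos rfl]
      linear_combination hXs (xstar - ∑ i ∈ Iio s, π i - ∑ i ∈ Ici s, π i * xh i)
    rw [hIio, hIoi, hmid, hIci]
    ring
  -- pointwise exchange inequality
  have hpt : ∀ i, pbar i + K * (π i * (xh i + p i / c i))
      ≤ p i + K * (π i * (xh i + pbar i / c i)) := by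
    intro i
    have hpi : c i * (p i / c i) = p i := mul_div_cancel₀ _ (hcne i)
    rcases lt_trichotomy i s with hlt | heq | hgt
    · -- i < s : c i ≤ K * π i and p i / c i ≤ 1 - xh i
      have hr := hord i s hlt.le
      have hcross : π s * c i ≤ π i * c s :=
        (div_le_div_iff₀ (hcpos s) (hcpos i)).mp hr
      have hci : c i ≤ K * π i := by
        rw [hKdef, div_mul_eq_mul_div, le_div_iff₀ (hπpos s)]
        nlinarith
      have ha : p i / c i ≤ 1 - xh i := by linarith [hp1 i]
      rw [hpbar i, if_pos hlt]
      have hb : (c i * (1 - xh i)) / c i = 1 - xh i :=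
        mul_div_cancel_left₀ _ (hcne i)
      rw [hb]
      nlinarith [mul_nonneg (sub_nonneg.mpr hci) (sub_nonneg.mpr ha)]
    · -- i = s : equality case, K * π s = c s
      subst heq
      have hKπ : K * π i = c i := div_mul_cancel₀ _ (hπne i)
      rw [hpbar i, if_neg (lt_irrefl i), if_pos rfl]
      have e1 : K * (π i * (xh i + p i / c i)) = K * (π i * xh i) + p i := by
        linear_combination (p i / c i) * hKπ + hpi
      have e2 : K * (π i * (xh i +
          K * (xstar - ∑ j ∈ Iio i, π j - ∑ j ∈ Ici i, π j * xh j) / c i))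
          = K * (π i * xh i)
            + K * (xstar - ∑ j ∈ Iio i, π j - ∑ j ∈ Ici i, π j * xh j) := by
        linear_combination K * hXs (xstar - ∑ j ∈ Iio i, π j - ∑ j ∈ Ici i, π j * xh j)
      linarith
    · -- s < i : K * π i ≤ c i and 0 ≤ p i / c i
      have hr := hord s i hgt.le
      have hcross : π i * c s ≤ π s * c i :=
        (div_le_div_iff₀ (hcpos i) (hcpos s)).mp hr
      have hci : K * π i ≤ c i := by
        rw [hKdef, div_mul_eq_mul_div, div_le_iff₀ (hπpos s)]
        nlinarith
      have ha : 0 ≤ p i / c i := div_nonneg (hp0 i) (hcpos i).le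
      rw [hpbar i, if_neg (asymm hgt), if_neg hgt.ne']
      simp only [zero_div, add_zero, zero_add]
      nlinarith [mul_nonneg (sub_nonneg.mpr hci) ha]
  have hsum := Finset.sum_le_sum (fun i (_ : i ∈ univ) => hpt i)
  rw [Finset.sum_add_distrib, Finset.sum_add_distrib, ← Finset.mul_sum,
    ← Finset.mul_sum, hid] at hsum
  have hKx : K * xstar ≤ K * ∑ i, π i * (xh i + p i / c i) :=
    mul_le_mul_of_nonneg_left hpc hK0
  linarith
end

section
/- The payment vector p̄ defined by p̄_j = c_j(1 - x̂_j) for j < s, p̄_j = 0 for j > s, and p̄_s = (c_s/π_s)(x* - Σ_{j<s} π_j - Σ_{j≥s} π_j x̂_j) is feasible for problem (P2): p̄_i ≥ 0 and x̂_i + p̄_i/c_i ≤ 1 for all i, and Σ_i π_i·(x̂_i + p̄_i/c_i) = x* (in particular ≥ x*). -/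
open Finset

/-- The payment vector `p̄` defined via the critical item `s` is
feasible for problem (P2): `p̄ i ≥ 0` and `xh i + p̄ i / c i ≤ 1` for all `i`,
and the influence-weighted opinion after payment equals `x*` exactly
(in particular it is `≥ x*`). -/
theorem pbar_feasible
    (n : ℕ) (hn : 1 ≤ n)
    (π c xh : Fin n → ℝ) (xstar : ℝ)
    (hπpos : ∀ i, 0 < π i) (hπsum : ∑ i, π i = 1)
    (hcpos : ∀ i, 0 < c i)
    (hxh : ∀ i, 0 ≤ xh i ∧ xh i ≤ 1)
    (hxstar_lt : ∑ i, π i * xh i < xstar) (hxstar_le : xstar ≤ 1)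
    (hord : ∀ i j : Fin n, i ≤ j → π j / c j ≤ π i / c i)
    (s : Fin n)
    (hs : IsLeast {j : Fin n |
      xstar ≤ ∑ i ∈ Finset.Iic j, π i + ∑ i ∈ Finset.Ioi j, π i * xh i} s)
    (pbar : Fin n → ℝ)
    (hpbar : ∀ j, pbar j =
      if j < s then c j * (1 - xh j)
      else if j = s then
        (c s / π s) *
          (xstar - ∑ i ∈ Finset.Iio s, π i - ∑ i ∈ Finset.Ici s, π i * xh i)
      else 0) :
    (∀ i, 0 ≤ pbar i) ∧
    (∀ i, xh i + pbar i / c i ≤ 1) ∧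
    ∑ i, π i * (xh i + pbar i / c i) = xstar := by
  obtain ⟨hs_mem, hs_min⟩ := hs
  simp only [Set.mem_setOf_eq] at hs_mem
  set A := xstar - ∑ i ∈ Finset.Iio s, π i - ∑ i ∈ Finset.Ici s, π i * xh i with hA
  have hIic : Finset.Iic s = insert s (Finset.Iio s) := by
    ext i
    simp [Finset.mem_Iic, Finset.mem_Iio, le_iff_lt_or_eq, or_comm]
  have hIci : Finset.Ici s = insert s (Finset.Ioi s) := by
    ext i
    simp only [Finset.mem_Ici, Finset.mem_insert, Finset.mem_Ioi]
    constructor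
    · intro h
      rcases eq_or_lt_of_le h with h | h
      · exact Or.inl h.symm
      · exact Or.inr h
    · rintro (rfl | h)
      · exact le_refl _
      · exact h.le
  have hsn : s ∉ Finset.Iio s := by simp
  have hsn' : s ∉ Finset.Ioi s := by simp
  have hcne : ∀ i : Fin n, c i ≠ 0 := fun i => (hcpos i).ne'
  have hπne : ∀ i : Fin n, π i ≠ 0 := fun i => (hπpos i).ne'
  -- split of univ
  have hdisj : Disjoint (Finset.Iio s) (Finset.Ici s) := by
    rw [Finset.disjoint_left]
    intro a ha hb
    exact absurd (Finset.mem_Ici.mp hb) (not_le.mpr (Finset.mem_Iio.mp ha))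
  have huniv : (Finset.univ : Finset (Fin n)) = Finset.Iio s ∪ Finset.Ici s := by
    ext i
    simp [lt_or_ge i s, le_or_gt s i]
  have hsplit : ∀ f : Fin n → ℝ,
      ∑ i, f i = ∑ i ∈ Finset.Iio s, f i + ∑ i ∈ Finset.Ici s, f i := by
    intro f
    rw [show (Finset.univ : Finset (Fin n)) = _ from huniv, Finset.sum_union hdisj]
  -- A > 0
  have hApos : 0 < A := by
    by_cases h0 : ∀ i, s ≤ i
    · have h1 : Finset.Iio s = ∅ := by
        ext i
        simp only [Finset.mem_Iio, Finset.notMem_empty, iff_false, not_lt]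
        exact h0 i
      have h2 : Finset.Ici s = Finset.univ := by
        ext i
        simp [h0 i]
      rw [hA, h1, h2]
      simp only [Finset.sum_empty]
      linarith
    · push_neg at h0
      obtain ⟨t, ht⟩ := h0
      have htlt : t < s := ht
      have hsval : 1 ≤ s.val := by
        have := htlt
        rw [Fin.lt_def] at this
        omega
      set s' : Fin n := ⟨s.val - 1, by omega⟩ with hs'
      have hs'lt : s' < s := by
        rw [Fin.lt_def]
        simp [hs']
        omega
      have hnotmem : ¬ (xstar ≤ ∑ i ∈ Finset.Iic s', π i + ∑ i ∈ Finset.Ioi s', π i * xh i) := by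
        intro hmem
        exact absurd (hs_min hmem) (not_le.mpr hs'lt)
      have hIic' : Finset.Iic s' = Finset.Iio s := by
        ext i
        simp only [Finset.mem_Iic, Finset.mem_Iio, Fin.le_def, Fin.lt_def, hs']
        omega
      have hIoi' : Finset.Ioi s' = Finset.Ici s := by
        ext i
        simp only [Finset.mem_Ioi, Finset.mem_Ici, Fin.le_def, Fin.lt_def, hs']
        omega
      rw [hIic', hIoi'] at hnotmem
      push_neg at hnotmem
      rw [hA]
      linarith
  -- A ≤ π s * (1 - xh s)
  have hAle : A ≤ π s * (1 - xh s) := by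
    rw [hIic, Finset.sum_insert hsn] at hs_mem
    have h1 : ∑ i ∈ Finset.Ici s, π i * xh i
        = π s * xh s + ∑ i ∈ Finset.Ioi s, π i * xh i := by
      rw [hIci, Finset.sum_insert hsn']
    have h2 : π s * (1 - xh s) = π s - π s * xh s := by ring
    rw [hA, h1, h2]
    linarith
  refine ⟨?_, ?_, ?_⟩
  · intro i
    rw [hpbar i]
    split_ifs with h1 h2
    · nlinarith [(hxh i).2, hcpos i]
    · exact mul_nonneg (div_nonneg (hcpos s).le (hπpos s).le) hApos.le
    · exact le_refl _
  · intro i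
    rw [hpbar i]
    split_ifs with h1 h2
    · rw [mul_div_cancel_left₀ _ (hcne i)]
      linarith
    · subst h2
      have key : c i / π i * A / c i = A / π i := by
        rw [div_mul_eq_mul_div, div_div, mul_comm (π i) (c i),
          mul_div_mul_left A (π i) (hcne i)]
      rw [key]
      have h3 : A / π i ≤ 1 - xh i := by
        rw [div_le_iff₀ (hπpos i)]
        nlinarith [hAle]
      linarith
    · rw [zero_div]
      simpa using (hxh i).2
  · have hexp : ∑ i, π i * (xh i + pbar i / c i)
        = ∑ i, π i * xh i + ∑ i, π i * (pbar i / c i) := by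
      rw [← Finset.sum_add_distrib]
      apply Finset.sum_congr rfl
      intro i _
      ring
    have hIio_sum : ∑ i ∈ Finset.Iio s, π i * (pbar i / c i)
        = ∑ i ∈ Finset.Iio s, (π i - π i * xh i) := by
      apply Finset.sum_congr rfl
      intro i hi
      rw [hpbar i, if_pos (Finset.mem_Iio.mp hi), mul_div_cancel_left₀ _ (hcne i)]
      ring
    have hIci_sum : ∑ i ∈ Finset.Ici s, π i * (pbar i / c i) = A := by
      rw [hIci, Finset.sum_insert hsn']
      have h1 : ∑ i ∈ Finset.Ioi s, π i * (pbar i / c i) = 0 := by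
        apply Finset.sum_eq_zero
        intro i hi
        have hi' : s < i := Finset.mem_Ioi.mp hi
        rw [hpbar i, if_neg (by exact not_lt.mpr hi'.le), if_neg (by exact hi'.ne')]
        simp
      have key : c s / π s * A / c s = A / π s := by
        rw [div_mul_eq_mul_div, div_div, mul_comm (π s) (c s),
          mul_div_mul_left A (π s) (hcne s)]
      rw [h1, hpbar s, if_neg (lt_irrefl s), if_pos rfl, key, mul_comm (π s),
        div_mul_cancel₀ A (hπne s), add_zero]
    have hsum2 : ∑ i, π i * (pbar i / c i)
        = ∑ i ∈ Finset.Iio s, (π i - π i * xh i) + A := by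
      rw [hsplit (fun i => π i * (pbar i / c i)), hIio_sum, hIci_sum]
    have hxhsplit : ∑ i, π i * xh i
        = ∑ i ∈ Finset.Iio s, π i * xh i + ∑ i ∈ Finset.Ici s, π i * xh i :=
      hsplit _
    have hsub : ∑ i ∈ Finset.Iio s, (π i - π i * xh i)
        = ∑ i ∈ Finset.Iio s, π i - ∑ i ∈ Finset.Iio s, π i * xh i :=
      Finset.sum_sub_distrib _ _
    rw [hexp, hsum2, hsub, hxhsplit, hA]
    ring
end

section
/- The minimum of Σ_i p_i over all feasible payment vectors p for problem (P2) equals Σ_{j<s} c_j(1 - x̂_j) + (c_s/π_s)(x* - Σ_{j<s} π_j - Σ_{j≥s} π_j x̂_j), where s is the critical item. -/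
open Finset

private lemma sum_Iio_add_Ici {n : ℕ} (s : Fin n) (g : Fin n → ℝ) :
    ∑ i ∈ Iio s, g i + ∑ i ∈ Ici s, g i = ∑ i, g i := by
  rw [← Finset.sum_union (by simp [Finset.disjoint_left])]
  congr 1; ext i; simp [lt_or_ge]

private lemma sum_Ici_eq {n : ℕ} (s : Fin n) (g : Fin n → ℝ) :
    ∑ i ∈ Ici s, g i = g s + ∑ i ∈ Ioi s, g i := by
  rw [Finset.Ici_eq_cons_Ioi, Finset.sum_cons]

private lemma sum_Iic_eq {n : ℕ} (s : Fin n) (g : Fin n → ℝ) :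
    ∑ i ∈ Iic s, g i = ∑ i ∈ Iio s, g i + g s := by
  have : Iic s = insert s (Iio s) := by ext i; simp [le_iff_lt_or_eq, or_comm]
  rw [this, Finset.sum_insert (by simp)]; ring

/-- The minimum of `∑ i, p i` over the feasible payment vectors of
problem (P2) equals
`∑_{j<s} c j (1 - xh j) + (c s / π s) (x* - ∑_{j<s} π j - ∑_{j≥s} π j xh j)`,
where `s` is the critical item. -/
theorem optimal_value
    (n : ℕ) (hn : 1 ≤ n)
    (π c xh : Fin n → ℝ) (xstar : ℝ)
    (hπpos : ∀ i, 0 < π i) (hπsum : ∑ i, π i = 1)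
    (hcpos : ∀ i, 0 < c i)
    (hxh : ∀ i, 0 ≤ xh i ∧ xh i ≤ 1)
    (hxstar_lt : ∑ i, π i * xh i < xstar) (hxstar_le : xstar ≤ 1)
    (hord : ∀ i j : Fin n, i ≤ j → π j / c j ≤ π i / c i)
    (s : Fin n)
    (hs : IsLeast {j : Fin n |
      xstar ≤ ∑ i ∈ Finset.Iic j, π i + ∑ i ∈ Finset.Ioi j, π i * xh i} s) :
    IsLeast
      {y : ℝ | ∃ p : Fin n → ℝ,
        (∀ i, 0 ≤ p i) ∧
        (∀ i, xh i + p i / c i ≤ 1) ∧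
        xstar ≤ ∑ i, π i * (xh i + p i / c i) ∧
        y = ∑ i, p i}
      (∑ j ∈ Finset.Iio s, c j * (1 - xh j) +
        (c s / π s) *
          (xstar - ∑ j ∈ Finset.Iio s, π j - ∑ j ∈ Finset.Ici s, π j * xh j)) := by
  set M : ℝ := xstar - ∑ j ∈ Finset.Iio s, π j - ∑ j ∈ Finset.Ici s, π j * xh j with hM
  set K : ℝ := c s / π s with hK
  have hcs := hcpos s
  have hπs := hπpos s
  have hKpos : 0 < K := div_pos hcs hπs
  -- M ≥ 0
  have hMpos : 0 ≤ M := by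
    rcases Nat.eq_zero_or_pos s.val with h0 | h0
    · have hIio : Iio s = (∅ : Finset (Fin n)) := by
        ext i; simp [Fin.lt_def, h0]
      have hIci : Ici s = (univ : Finset (Fin n)) := by
        ext i; simp [Fin.le_def, h0]
      rw [hM, hIio, hIci]; simp; linarith
    · have hjlt : (⟨s.val - 1, by omega⟩ : Fin n) < s := by
        rw [Fin.lt_def]; simp; omega
      have hjs : ¬ s ≤ (⟨s.val - 1, by omega⟩ : Fin n) := not_le.2 hjlt
      have hnot : ¬ xstar ≤ ∑ i ∈ Finset.Iic (⟨s.val - 1, by omega⟩ : Fin n), π i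
          + ∑ i ∈ Finset.Ioi (⟨s.val - 1, by omega⟩ : Fin n), π i * xh i := by
        intro h; exact hjs (hs.2 h)
      push_neg at hnot
      have e1 : Iic (⟨s.val - 1, by omega⟩ : Fin n) = Iio s := by
        ext i; simp only [mem_Iic, mem_Iio, Fin.le_def, Fin.lt_def]; omega
      have e2 : Ioi (⟨s.val - 1, by omega⟩ : Fin n) = Ici s := by
        ext i; simp only [mem_Ioi, mem_Ici, Fin.le_def, Fin.lt_def]; omega
      rw [e1, e2] at hnot
      rw [hM]; linarith
  -- M ≤ π s * (1 - xh s)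
  have hMle : M ≤ π s * (1 - xh s) := by
    have h1 := hs.1
    rw [Set.mem_setOf_eq, sum_Iic_eq] at h1
    have h2 : ∑ i ∈ Ici s, π i * xh i = π s * xh s + ∑ i ∈ Ioi s, π i * xh i :=
      sum_Ici_eq s _
    rw [hM, h2]; nlinarith
  constructor
  · -- membership: the greedy payment vector
    refine ⟨fun i => if i < s then c i * (1 - xh i) else if i = s then K * M else 0,
      ?_, ?_, ?_, ?_⟩
    · intro i
      by_cases h1 : i < s
      · simp only [h1, if_true]
        have := (hxh i).2
        nlinarith [hcpos i]
      · by_cases h2 : i = s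
        · subst h2
          beta_reduce
          rw [if_neg h1, if_pos rfl]
          exact mul_nonneg (le_of_lt hKpos) hMpos
        · simp [h1, h2]
    · intro i
      by_cases h1 : i < s
      · simp only [h1, if_true]
        rw [mul_div_cancel_left₀ _ (ne_of_gt (hcpos i))]
        linarith
      · by_cases h2 : i = s
        · subst h2
          beta_reduce
          rw [if_neg h1, if_pos rfl]
          have e : K * M / c i = M / π i := by
            rw [hK]; field_simp
          rw [e]
          have : M / π i ≤ 1 - xh i := by
            rw [div_le_iff₀ hπs]; nlinarith
          linarith
        · simp only [h1, if_false, h2, if_false]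
          rw [zero_div, add_zero]
          exact (hxh i).2
    · -- constraint satisfied with equality
      have key : ∑ i, π i * ((if i < s then c i * (1 - xh i) else if i = s then K * M else 0) / c i)
          = ∑ i ∈ Iio s, π i * (1 - xh i) + M := by
        rw [← sum_Iio_add_Ici s]
        congr 1
        · apply Finset.sum_congr rfl
          intro i hi
          rw [mem_Iio] at hi
          rw [if_pos hi, mul_div_cancel_left₀ _ (ne_of_gt (hcpos i))]
        · rw [sum_Ici_eq]
          have h1 : π s * ((if s < s then c s * (1 - xh s) else if s = s then K * M else 0) / c s) = M := by
            rw [if_neg (lt_irrefl s), if_pos rfl, hK]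
            field_simp
          rw [h1]
          have h2 : ∀ i ∈ Ioi s, π i * ((if i < s then c i * (1 - xh i) else if i = s then K * M else 0) / c i) = 0 := by
            intro i hi
            rw [mem_Ioi] at hi
            rw [if_neg (not_lt.2 (le_of_lt hi)), if_neg (ne_of_gt hi), zero_div, mul_zero]
          rw [Finset.sum_congr rfl h2]
          simp
      have split : ∑ i, π i * (xh i + (if i < s then c i * (1 - xh i) else if i = s then K * M else 0) / c i)
          = ∑ i, π i * xh i + (∑ i ∈ Iio s, π i * (1 - xh i) + M) := by
        rw [← key, ← Finset.sum_add_distrib]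
        apply Finset.sum_congr rfl
        intro i _; ring
      rw [split]
      have hxhsplit : ∑ i, π i * xh i = ∑ i ∈ Iio s, π i * xh i + ∑ i ∈ Ici s, π i * xh i :=
        (sum_Iio_add_Ici s _).symm
      have husplit : ∑ i ∈ Iio s, π i * (1 - xh i) = ∑ i ∈ Iio s, π i - ∑ i ∈ Iio s, π i * xh i := by
        rw [← Finset.sum_sub_distrib]
        apply Finset.sum_congr rfl
        intro i _; ring
      rw [hxhsplit, husplit, hM]
      linarith
    · -- total payment equals the claimed value
      rw [← sum_Iio_add_Ici s]
      congr 1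
      · apply Finset.sum_congr rfl
        intro i hi
        rw [mem_Iio] at hi
        rw [if_pos hi]
      · rw [sum_Ici_eq]
        have h2 : ∀ i ∈ Ioi s, (if i < s then c i * (1 - xh i) else if i = s then K * M else 0) = 0 := by
          intro i hi
          rw [mem_Ioi] at hi
          rw [if_neg (not_lt.2 (le_of_lt hi)), if_neg (ne_of_gt hi)]
        rw [Finset.sum_congr rfl h2, if_neg (lt_irrefl s), if_pos rfl]
        simp
  · -- lower bound
    rintro y ⟨p, hp0, hp1, hpc, rfl⟩
    set f : Fin n → ℝ := fun i =>
      if i < s then c i * (1 - xh i) + K * (π i * (p i / c i) - π i * (1 - xh i))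
      else K * (π i * (p i / c i)) with hf
    have hfle : ∀ i, f i ≤ p i := by
      intro i
      have hci := hcpos i
      have hπi := hπpos i
      have hpi := hp0 i
      have ht0 : 0 ≤ p i / c i := div_nonneg hpi (le_of_lt hci)
      have ht1 : p i / c i ≤ 1 - xh i := by
        have := hp1 i; linarith
      have hpt : p i = c i * (p i / c i) := by field_simp
      by_cases h1 : i < s
      · simp only [hf, h1, if_true]
        have hord1 := hord i s (le_of_lt h1)
        have hKge : c i ≤ K * π i := by
          rw [hK, div_mul_eq_mul_div, le_div_iff₀ hπs]
          rw [div_le_div_iff₀ hcs hci] at hord1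
          nlinarith
        nlinarith [mul_nonneg (sub_nonneg.2 hKge) (sub_nonneg.2 ht1)]
      · simp only [hf, h1, if_false]
        by_cases h2 : i = s
        · subst h2
          have e : K * (π i * (p i / c i)) = p i := by
            rw [hK]; field_simp
          exact le_of_eq e
        · have h3 : s < i := lt_of_le_of_ne (not_lt.1 h1) (Ne.symm h2)
          have hord1 := hord s i (le_of_lt h3)
          have hKle : K * π i ≤ c i := by
            rw [hK, div_mul_eq_mul_div, div_le_iff₀ hπs]
            rw [div_le_div_iff₀ hci hcs] at hord1
            nlinarith
          calc K * (π i * (p i / c i)) ≤ c i * (p i / c i) := by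
                nlinarith [mul_nonneg (sub_nonneg.2 hKle) ht0]
            _ = p i := hpt.symm
    have hsum : ∑ i, f i ≤ ∑ i, p i := Finset.sum_le_sum fun i _ => hfle i
    have hq : ∑ i, π i * (p i / c i) ≥ xstar - ∑ i, π i * xh i := by
      have e : ∑ i, π i * (xh i + p i / c i) = ∑ i, π i * xh i + ∑ i, π i * (p i / c i) := by
        rw [← Finset.sum_add_distrib]
        apply Finset.sum_congr rfl; intro i _; ring
      rw [e] at hpc; linarith
    have hsumf : ∑ i, f i
        = ∑ j ∈ Iio s, c j * (1 - xh j)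
          + K * (∑ i, π i * (p i / c i) - ∑ j ∈ Iio s, π j * (1 - xh j)) := by
      rw [← sum_Iio_add_Ici s f]
      have e1 : ∑ i ∈ Iio s, f i
          = ∑ j ∈ Iio s, c j * (1 - xh j)
            + K * (∑ i ∈ Iio s, π i * (p i / c i) - ∑ j ∈ Iio s, π j * (1 - xh j)) := by
        rw [mul_sub, Finset.mul_sum, Finset.mul_sum]
        rw [← Finset.sum_sub_distrib, ← Finset.sum_add_distrib]
        apply Finset.sum_congr rfl
        intro i hi
        rw [mem_Iio] at hi
        simp only [hf, hi, if_true]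
        ring
      have e2 : ∑ i ∈ Ici s, f i = K * ∑ i ∈ Ici s, π i * (p i / c i) := by
        rw [Finset.mul_sum]
        apply Finset.sum_congr rfl
        intro i hi
        rw [mem_Ici] at hi
        simp only [hf, not_lt.2 hi, if_false]
      have e3 : ∑ i ∈ Iio s, π i * (p i / c i) + ∑ i ∈ Ici s, π i * (p i / c i)
          = ∑ i, π i * (p i / c i) := sum_Iio_add_Ici s _
      rw [e1, e2, ← e3]
      ring
    have hMbound : M ≤ ∑ i, π i * (p i / c i) - ∑ j ∈ Iio s, π j * (1 - xh j) := by
      have hxhsplit : ∑ i, π i * xh i = ∑ i ∈ Iio s, π i * xh i + ∑ i ∈ Ici s, π i * xh i :=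
        (sum_Iio_add_Ici s _).symm
      have husplit : ∑ j ∈ Iio s, π j * (1 - xh j) = ∑ j ∈ Iio s, π j - ∑ j ∈ Iio s, π j * xh j := by
        rw [← Finset.sum_sub_distrib]
        apply Finset.sum_congr rfl; intro i _; ring
      rw [hM, husplit]
      rw [hxhsplit] at hq
      linarith
    have hfinal : ∑ j ∈ Iio s, c j * (1 - xh j) + K * M ≤ ∑ i, f i := by
      rw [hsumf]
      have := mul_le_mul_of_nonneg_left hMbound (le_of_lt hKpos)
      linarith
    linarith
end

section
/- Any optimal solution of problem (P2) is tight: if p* is feasible and Σ_i p*_i ≤ Σ_i p_i for every feasible p, then Σ_i π_i·(x̂_i + p*_i/c_i) = x*. -/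
open Finset

/-- Any optimal solution of problem (P2) is tight: if `p*` is
feasible and its total payment is minimal among feasible payment vectors, then
the influence-weighted opinion constraint holds with equality. -/
theorem optimal_is_tight
    (n : ℕ) (hn : 1 ≤ n)
    (π c xh : Fin n → ℝ) (xstar : ℝ)
    (hπpos : ∀ i, 0 < π i) (hπsum : ∑ i, π i = 1)
    (hcpos : ∀ i, 0 < c i)
    (hxh : ∀ i, 0 ≤ xh i ∧ xh i ≤ 1)
    (hxstar_lt : ∑ i, π i * xh i < xstar) (hxstar_le : xstar ≤ 1)
    (pstar : Fin n → ℝ)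
    (hfeas : (∀ i, 0 ≤ pstar i) ∧
      (∀ i, xh i + pstar i / c i ≤ 1) ∧
      xstar ≤ ∑ i, π i * (xh i + pstar i / c i))
    (hopt : ∀ p : Fin n → ℝ,
      (∀ i, 0 ≤ p i) →
      (∀ i, xh i + p i / c i ≤ 1) →
      xstar ≤ ∑ i, π i * (xh i + p i / c i) →
      ∑ i, pstar i ≤ ∑ i, p i) :
    ∑ i, π i * (xh i + pstar i / c i) = xstar := by
  obtain ⟨hp0, hp1, hpge⟩ := hfeas
  by_contra hne
  have hgt : xstar < ∑ i, π i * (xh i + pstar i / c i) := lt_of_le_of_ne hpge (Ne.symm hne)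
  set A := ∑ i, π i * xh i with hA
  set S := ∑ i, π i * (pstar i / c i) with hS
  have hsplit : ∑ i, π i * (xh i + pstar i / c i) = A + S := by
    rw [hA, hS, ← Finset.sum_add_distrib]
    congr 1; ext i; ring
  have hSpos : 0 < S := by
    have := hgt; rw [hsplit] at this; linarith
  have hSnn_terms : ∀ i ∈ Finset.univ, 0 ≤ π i * (pstar i / c i) := fun i _ =>
    mul_nonneg (hπpos i).le (div_nonneg (hp0 i) (hcpos i).le)
  -- some pstar i > 0
  have hsumpos : 0 < ∑ i, pstar i := by
    obtain ⟨i, -, hi⟩ := Finset.exists_lt_of_sum_lt (f := fun _ => (0:ℝ))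
      (by simpa using hSpos)
    have hpi : 0 < pstar i := by
      by_contra h
      have : pstar i = 0 := le_antisymm (not_lt.mp h) (hp0 i)
      rw [this] at hi; simp at hi
    calc 0 < pstar i := hpi
      _ ≤ ∑ j, pstar j := Finset.single_le_sum (fun j _ => hp0 j) (Finset.mem_univ i)
  set t := (xstar - A) / S with ht
  have ht0 : 0 ≤ t := div_nonneg (by linarith) hSpos.le
  have ht1 : t < 1 := by
    rw [ht, div_lt_one hSpos]
    have := hgt; rw [hsplit] at this; linarith
  have hle := hopt (fun i => t * pstar i)
    (fun i => mul_nonneg ht0 (hp0 i))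
    (fun i => by
      have h1 : t * pstar i / c i ≤ pstar i / c i := by
        gcongr
        · exact (hcpos i).le
        · nlinarith [hp0 i]
      have := hp1 i; linarith)
    (by
      have hsum : ∑ i, π i * (xh i + t * pstar i / c i) = A + t * S := by
        rw [hA, hS, Finset.mul_sum, ← Finset.sum_add_distrib]
        congr 1; ext i; ring
      rw [hsum, ht, div_mul_cancel₀ _ hSpos.ne']; linarith)
  have : ∑ i, (fun i => t * pstar i) i = t * ∑ i, pstar i := by
    simp [Finset.mul_sum]
  rw [this] at hle
  nlinarith
end

section
/- Exchange lemma: suppose p is a feasible payment vector and there exist indices ℓ, q with π_ℓ/c_ℓ > π_q/c_q, p_ℓ < c_ℓ(1 - x̂_ℓ), and p_q > 0. Then p is not optimal: there exists a feasible payment vector p' with Σ_i p'_i < Σ_i p_i. -/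
open Finset

/-- Exchange lemma: if `p` is feasible and there are indices
`ℓ, q` with `π ℓ / c ℓ > π q / c q`, `p ℓ < c ℓ * (1 - xh ℓ)` and `p q > 0`,
then `p` is not optimal: some feasible `p'` has strictly smaller total payment. -/
theorem exchange_lemma
    (n : ℕ) (hn : 1 ≤ n)
    (π c xh : Fin n → ℝ) (xstar : ℝ)
    (hπpos : ∀ i, 0 < π i) (hπsum : ∑ i, π i = 1)
    (hcpos : ∀ i, 0 < c i)
    (hxh : ∀ i, 0 ≤ xh i ∧ xh i ≤ 1)
    (hxstar_lt : ∑ i, π i * xh i < xstar) (hxstar_le : xstar ≤ 1)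
    (p : Fin n → ℝ)
    (hfeas : (∀ i, 0 ≤ p i) ∧
      (∀ i, xh i + p i / c i ≤ 1) ∧
      xstar ≤ ∑ i, π i * (xh i + p i / c i))
    (l q : Fin n)
    (hlq : π q / c q < π l / c l)
    (hl : p l < c l * (1 - xh l))
    (hq : 0 < p q) :
    ∃ p' : Fin n → ℝ,
      (∀ i, 0 ≤ p' i) ∧
      (∀ i, xh i + p' i / c i ≤ 1) ∧
      xstar ≤ ∑ i, π i * (xh i + p' i / c i) ∧
      ∑ i, p' i < ∑ i, p i := by
  obtain ⟨hp0, hp1, hpsum⟩ := hfeas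
  have hlne : l ≠ q := by
    rintro rfl; exact lt_irrefl _ hlq
  set r : ℝ := (π q * c l) / (c q * π l) with hr_def
  have hcl := hcpos l
  have hcq := hcpos q
  have hπl := hπpos l
  have hπq := hπpos q
  have hr0 : 0 < r := by positivity
  have hr1 : r < 1 := by
    rw [hr_def, div_lt_one (by positivity)]
    have := (div_lt_div_iff₀ hcq hcl).mp hlq
    nlinarith
  set A : ℝ := c l * (1 - xh l) - p l with hA_def
  have hA : 0 < A := by simp [hA_def]; linarith
  set δq : ℝ := min (p q) (A / r) with hδq_def
  have hδq0 : 0 < δq := lt_min hq (by positivity)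
  set δl : ℝ := r * δq with hδl_def
  have hδl0 : 0 < δl := by positivity
  have hδlA : δl ≤ A := by
    have : δq ≤ A / r := min_le_right _ _
    calc δl = r * δq := rfl
      _ ≤ r * (A / r) := by nlinarith
      _ = A := by field_simp
  have hδlq : δl < δq := by
    have : δl = r * δq := rfl
    nlinarith
  refine ⟨fun i => p i + (if i = l then δl else 0) - (if i = q then δq else 0),
    ?_, ?_, ?_, ?_⟩
  · intro i
    by_cases hi : i = l
    · simp only [hi, eq_self_iff_true, if_true, if_neg hlne, sub_zero]
      have := hp0 l; linarith
    · by_cases hi' : i = q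
      · simp only [hi', if_neg (Ne.symm hlne), eq_self_iff_true, if_true, add_zero]
        have : δq ≤ p q := min_le_left _ _
        linarith
      · simp only [if_neg hi, if_neg hi', add_zero, sub_zero]
        exact hp0 i
  · intro i
    by_cases hi : i = l
    · simp only [hi, eq_self_iff_true, if_true, if_neg hlne, sub_zero]
      have hA' : δl ≤ c l * (1 - xh l) - p l := by rw [hA_def] at hδlA; exact hδlA
      have h1 : (p l + δl) / c l ≤ 1 - xh l := by
        rw [div_le_iff₀ hcl]; nlinarith
      linarith
    · by_cases hi' : i = q
      · simp only [hi', if_neg (Ne.symm hlne), eq_self_iff_true, if_true, add_zero]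
        have h3 : (p q - δq) / c q ≤ p q / c q :=
          (div_le_div_iff_of_pos_right hcq).mpr (by linarith)
        have := hp1 q; linarith
      · simp only [if_neg hi, if_neg hi', add_zero, sub_zero]
        exact hp1 i
  · have key : ∀ i, π i * (xh i + (p i + (if i = l then δl else 0)
        - (if i = q then δq else 0)) / c i)
        = π i * (xh i + p i / c i)
          + (if i = l then π l * (δl / c l) else 0)
          - (if i = q then π q * (δq / c q) else 0) := by
      intro i
      by_cases hi : i = l
      · simp only [hi, eq_self_iff_true, if_true, if_neg hlne, sub_zero]
        have := (hcpos l).ne'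
        field_simp
        ring
      · by_cases hi' : i = q
        · simp only [hi', if_neg (Ne.symm hlne), eq_self_iff_true, if_true, add_zero, zero_add]
          have := (hcpos q).ne'
          field_simp
          ring
        · simp only [if_neg hi, if_neg hi', add_zero, sub_zero]
    have cancel : π l * (δl / c l) = π q * (δq / c q) := by
      rw [hδl_def, hr_def]
      field_simp
    calc xstar ≤ ∑ i, π i * (xh i + p i / c i) := hpsum
      _ = ∑ i, π i * (xh i + (p i + (if i = l then δl else 0)
            - (if i = q then δq else 0)) / c i) := by
          simp only [key]
          rw [Finset.sum_sub_distrib, Finset.sum_add_distrib,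
            Finset.sum_ite_eq' univ l, Finset.sum_ite_eq' univ q]
          simp [cancel]
  · have hs : ∑ i, (p i + (if i = l then δl else 0) - (if i = q then δq else 0))
        = (∑ i, p i) + δl - δq := by
      rw [Finset.sum_sub_distrib, Finset.sum_add_distrib,
        Finset.sum_ite_eq' univ l, Finset.sum_ite_eq' univ q]
      simp
    rw [hs]
    linarith
end

section
/- Equilibrium of the best-response dynamics (Theorem 2): assume A has self-confidence, let E_1, …, E_m be the ergodic classes of A, and for each k let π^(k) : Fin n → ℝ be a stationary distribution of A supported on E_k (π^(k)_j ≥ 0, Σ_j π^(k)_j = 1, π^(k)_j = 0 for j ∉ E_k, and Σ_i π^(k)_i A_{ij} = π^(k)_j for all j). Then for every state i and every class k the limit h_i^(k) := lim_{ℓ→∞} Σ_{j∈E_k} (A^ℓ)_{ij} exists, and for every initial opinion vector x : Fin n → ℝ and every state i, lim_{ℓ→∞} ((A^ℓ)x)_i = Σ_{k=1}^m h_i^(k) · Σ_{j∈E_k} π^(k)_j x_j. In particular the limit of the best-response dynamics x(t+1) = A x(t) exists and is unique for each initial condition. -/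
open Finset Filter Topology Matrix

/-- `j` is a consequent of `i` relative to the matrix `A`. -/
def Consequent {n : ℕ} (A : Matrix (Fin n) (Fin n) ℝ) (i j : Fin n) : Prop :=
  ∃ m : ℕ, 1 ≤ m ∧ 0 < (A ^ m) i j

/-- A state is recurrent if it is a consequent of each of its consequents. -/
def Recurrent {n : ℕ} (A : Matrix (Fin n) (Fin n) ℝ) (i : Fin n) : Prop :=
  ∀ j, Consequent A i j → Consequent A j i

section Basic
variable {n : ℕ} {A : Matrix (Fin n) (Fin n) ℝ}

lemma pow_entry_nonneg (hA : ∀ i j, 0 ≤ A i j) (ℓ : ℕ) (i j : Fin n) :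
    0 ≤ (A ^ ℓ) i j := by
  induction ℓ generalizing i j with
  | zero => rw [pow_zero, Matrix.one_apply]; positivity
  | succ ℓ ih =>
    rw [pow_succ, Matrix.mul_apply]
    exact Finset.sum_nonneg fun t _ => mul_nonneg (ih i t) (hA t j)

lemma pow_row_sum (hA : ∀ i, ∑ j, A i j = 1) (ℓ : ℕ) (i : Fin n) :
    ∑ j, (A ^ ℓ) i j = 1 := by
  induction ℓ generalizing i with
  | zero => simp [Matrix.one_apply]
  | succ ℓ ih =>
    simp only [pow_succ, Matrix.mul_apply]
    rw [Finset.sum_comm]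
    calc ∑ t, ∑ j, (A ^ ℓ) i t * A t j
        = ∑ t, (A ^ ℓ) i t * ∑ j, A t j := by
          simp [Finset.mul_sum]
      _ = 1 := by simp only [hA, mul_one]; exact ih i

lemma pow_entry_le_one (h0 : ∀ i j, 0 ≤ A i j) (h1 : ∀ i, ∑ j, A i j = 1)
    (ℓ : ℕ) (i j : Fin n) : (A ^ ℓ) i j ≤ 1 := by
  calc (A ^ ℓ) i j ≤ ∑ t, (A ^ ℓ) i t :=
    Finset.single_le_sum (fun t _ => pow_entry_nonneg h0 ℓ i t) (Finset.mem_univ j)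
  _ = 1 := pow_row_sum h1 ℓ i

lemma pow_add_entry (a b : ℕ) (i j : Fin n) :
    (A ^ (a + b)) i j = ∑ t, (A ^ a) i t * (A ^ b) t j := by
  rw [pow_add, Matrix.mul_apply]

lemma persist (h0 : ∀ i j, 0 ≤ A i j) (hself : ∀ i, 0 < A i i)
    {ℓ : ℕ} {i j : Fin n} (h : 0 < (A ^ ℓ) i j) : 0 < (A ^ (ℓ + 1)) i j := by
  rw [pow_add_entry]
  have hpos : 0 < (A ^ ℓ) i j * (A ^ 1) j j := by
    simpa using mul_pos h (hself j)
  refine lt_of_lt_of_le hpos ?_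
  exact Finset.single_le_sum
    (fun t _ => mul_nonneg (pow_entry_nonneg h0 ℓ i t)
      (pow_entry_nonneg h0 1 t j)) (Finset.mem_univ j)

lemma persist' (h0 : ∀ i j, 0 ≤ A i j) (hself : ∀ i, 0 < A i i)
    {ℓ ℓ' : ℕ} (hle : ℓ ≤ ℓ') {i j : Fin n}
    (h : 0 < (A ^ ℓ) i j) : 0 < (A ^ ℓ') i j := by
  induction ℓ' with
  | zero => have : ℓ = 0 := by omega
            subst this; exact h
  | succ ℓ' ih =>
    rcases Nat.lt_or_ge ℓ (ℓ' + 1) with hlt | hge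
    · exact persist h0 hself (ih (by omega))
    · have : ℓ = ℓ' + 1 := by omega
      subst this; exact h

lemma consequent_eventually (h0 : ∀ i j, 0 ≤ A i j) (hself : ∀ i, 0 < A i i)
    {i j : Fin n} (h : Consequent A i j) :
    ∀ᶠ ℓ in atTop, 0 < (A ^ ℓ) i j := by
  obtain ⟨m, _, hm⟩ := h
  filter_upwards [eventually_ge_atTop m] with ℓ hℓ
  exact persist' h0 hself hℓ hm

lemma consequent_trans (h0 : ∀ i j, 0 ≤ A i j) {i j t : Fin n}
    (h1 : Consequent A i j) (h2 : Consequent A j t) : Consequent A i t := by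
  obtain ⟨a, ha1, ha⟩ := h1
  obtain ⟨b, hb1, hb⟩ := h2
  refine ⟨a + b, by omega, ?_⟩
  rw [pow_add_entry]
  refine lt_of_lt_of_le (mul_pos ha hb) ?_
  exact Finset.single_le_sum
    (fun t' _ => mul_nonneg (pow_entry_nonneg h0 a i t')
      (pow_entry_nonneg h0 b t' t)) (Finset.mem_univ j)

lemma consequent_self (hself : ∀ i, 0 < A i i) (i : Fin n) : Consequent A i i :=
  ⟨1, le_refl 1, by simpa using hself i⟩

/-- every state has a recurrent consequent -/
lemma exists_recurrent_consequent (h0 : ∀ i j, 0 ≤ A i j) (hself : ∀ i, 0 < A i i)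
    (i : Fin n) : ∃ r, Recurrent A r ∧ Consequent A i r := by
  classical
  let F : Fin n → Finset (Fin n) := fun t => Finset.univ.filter (fun s => Consequent A t s)
  have hFself : ∀ t, t ∈ F t := fun t => by
    simp [F, consequent_self hself]
  have hFsub : ∀ t s, Consequent A t s → F s ⊆ F t := by
    intro t s hts u hu
    simp only [F, Finset.mem_filter, Finset.mem_univ, true_and] at hu ⊢
    exact consequent_trans h0 hts hu
  -- choose a consequent of i with minimal F-card
  obtain ⟨r, hr, hrmin⟩ := Finset.exists_min_image (F i) (fun t => (F t).card)
    ⟨i, hFself i⟩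
  have hir : Consequent A i r := by
    simpa [F] using hr
  refine ⟨r, ?_, hir⟩
  intro t hrt
  have htFi : t ∈ F i := by
    simp only [F, Finset.mem_filter, Finset.mem_univ, true_and]
    exact consequent_trans h0 hir hrt
  have hsub : F t ⊆ F r := hFsub r t hrt
  have : F t = F r := Finset.eq_of_subset_of_card_le hsub (hrmin t htFi)
  have : r ∈ F t := this ▸ hFself r
  simpa [F] using this
end Basic


lemma geom_decay (a : ℕ → ℝ) (ha0 : ∀ ℓ, 0 ≤ a ℓ) (hmono : ∀ ℓ, a (ℓ + 1) ≤ a ℓ)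
    (N : ℕ) (hN : 0 < N) (θ : ℝ) (hθ0 : 0 ≤ θ) (hθ1 : θ < 1)
    (hstep : ∀ ℓ, a (ℓ + N) ≤ θ * a ℓ) : Tendsto a atTop (𝓝 0) := by
  have hant : Antitone a := antitone_nat_of_succ_le hmono
  have hkey : ∀ s : ℕ, a (N * s) ≤ θ ^ s * a 0 := by
    intro s
    induction s with
    | zero => simp
    | succ s ih =>
      have he : N * (s + 1) = N * s + N := by ring
      rw [he]
      calc a (N * s + N) ≤ θ * a (N * s) := hstep _
        _ ≤ θ * (θ ^ s * a 0) := mul_le_mul_of_nonneg_left ih hθ0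
        _ = θ ^ (s + 1) * a 0 := by ring
  have hub : ∀ ℓ, a ℓ ≤ θ ^ (ℓ / N) * a 0 := fun ℓ =>
    (hant (Nat.mul_div_le ℓ N)).trans (hkey _)
  have hdiv : Tendsto (fun ℓ : ℕ => ℓ / N) atTop atTop :=
    tendsto_atTop_atTop_of_monotone (fun x y hxy => Nat.div_le_div_right hxy)
      (fun b => ⟨N * b, le_of_eq (Nat.mul_div_cancel_left b hN).symm⟩)
  have hgeo : Tendsto (fun ℓ : ℕ => θ ^ (ℓ / N) * a 0) atTop (𝓝 0) := by
    have h1 : Tendsto (fun s : ℕ => θ ^ s) atTop (𝓝 0) :=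
      tendsto_pow_atTop_nhds_zero_of_lt_one hθ0 hθ1
    have := (h1.comp hdiv).mul_const (a 0)
    simpa using this
  exact squeeze_zero ha0 hub hgeo


section C
variable {n : ℕ} {A : Matrix (Fin n) (Fin n) ℝ}


lemma pow_closed (h0 : ∀ i j, 0 ≤ A i j) {S : Finset (Fin n)}
    (hcl : ∀ i ∈ S, ∀ j ∉ S, A i j = 0) :
    ∀ ℓ, ∀ i ∈ S, ∀ j ∉ S, (A ^ ℓ) i j = 0 := by
  intro ℓ
  induction ℓ with
  | zero =>
    intro i hi j hj
    have : i ≠ j := fun h => hj (h ▸ hi)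
    simp [Matrix.one_apply, this]
  | succ ℓ ih =>
    intro i hi j hj
    rw [pow_succ, Matrix.mul_apply]
    refine Finset.sum_eq_zero fun t _ => ?_
    by_cases ht : t ∈ S
    · rw [hcl t ht j hj, mul_zero]
    · rw [ih i hi t ht, zero_mul]

lemma pow_row_sum_closed (h0 : ∀ i j, 0 ≤ A i j) (h1 : ∀ i, ∑ j, A i j = 1)
    {S : Finset (Fin n)} (hcl : ∀ i ∈ S, ∀ j ∉ S, A i j = 0)
    (ℓ : ℕ) {i : Fin n} (hi : i ∈ S) : ∑ t ∈ S, (A ^ ℓ) i t = 1 := by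
  rw [Finset.sum_subset (Finset.subset_univ S)
    (fun t _ ht => pow_closed h0 hcl ℓ i hi t ht)]
  exact pow_row_sum h1 ℓ i

lemma stat_pow {π : Fin n → ℝ} (hst : ∀ j, ∑ t, π t * A t j = π j) :
    ∀ ℓ j, ∑ t, π t * (A ^ ℓ) t j = π j := by
  intro ℓ
  induction ℓ with
  | zero => intro j; simp [Matrix.one_apply]
  | succ ℓ ih =>
    intro j
    simp only [pow_succ, Matrix.mul_apply, Finset.mul_sum]
    rw [Finset.sum_comm]
    calc ∑ u, ∑ t, π t * ((A ^ ℓ) t u * A u j)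
        = ∑ u, (∑ t, π t * (A ^ ℓ) t u) * A u j := by
          congr 1; ext u; rw [Finset.sum_mul]; congr 1; ext t; ring
      _ = ∑ u, π u * A u j := by simp only [ih]
      _ = π j := hst j

lemma class_tendsto (h0 : ∀ i j, 0 ≤ A i j) (h1 : ∀ i, ∑ j, A i j = 1)
    {S : Finset (Fin n)} (hS : S.Nonempty)
    (hcl : ∀ i ∈ S, ∀ j ∉ S, A i j = 0)
    {N : ℕ} (hN : 0 < N) (hNpos : ∀ i ∈ S, ∀ j ∈ S, 0 < (A ^ N) i j)
    (π : Fin n → ℝ) (hπ0 : ∀ j, 0 ≤ π j) (hπs : ∑ t ∈ S, π t = 1)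
    (hπsupp : ∀ j ∉ S, π j = 0)
    (hπst : ∀ j, ∑ t, π t * A t j = π j)
    {i j : Fin n} (hi : i ∈ S) (hj : j ∈ S) :
    Tendsto (fun ℓ => (A ^ ℓ) i j) atTop (𝓝 (π j)) := by
  classical
  set M : ℕ → ℝ := fun ℓ => S.sup' hS (fun t => (A ^ ℓ) t j) with hM
  set mm : ℕ → ℝ := fun ℓ => S.inf' hS (fun t => (A ^ ℓ) t j) with hmm
  have hle_M : ∀ ℓ, ∀ t ∈ S, (A ^ ℓ) t j ≤ M ℓ := fun ℓ t ht => Finset.le_sup' (fun t => (A ^ ℓ) t j) ht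
  have hmm_le : ∀ ℓ, ∀ t ∈ S, mm ℓ ≤ (A ^ ℓ) t j := fun ℓ t ht => Finset.inf'_le (fun t => (A ^ ℓ) t j) ht
  have hmmM : ∀ ℓ, mm ℓ ≤ M ℓ := fun ℓ => by
    obtain ⟨t, ht⟩ := hS; exact (hmm_le ℓ t ht).trans (hle_M ℓ t ht)
  -- one step via an arbitrary extra power s
  have hstep_ub : ∀ s ℓ, ∀ a ∈ S, (A ^ (s + ℓ)) a j ≤ M ℓ := by
    intro s ℓ a ha
    rw [pow_add, Matrix.mul_apply]
    have hz : ∀ t ∈ Finset.univ, t ∉ S → (A ^ s) a t * (A ^ ℓ) t j = 0 :=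
      fun t _ ht => by rw [pow_closed h0 hcl s a ha t ht, zero_mul]
    rw [← Finset.sum_subset (Finset.subset_univ S) hz]
    calc ∑ t ∈ S, (A ^ s) a t * (A ^ ℓ) t j
        ≤ ∑ t ∈ S, (A ^ s) a t * M ℓ := by
          refine Finset.sum_le_sum fun t ht => ?_
          exact mul_le_mul_of_nonneg_left (hle_M ℓ t ht) (pow_entry_nonneg h0 s a t)
      _ = M ℓ := by rw [← Finset.sum_mul, pow_row_sum_closed h0 h1 hcl s ha, one_mul]
  have hstep_lb : ∀ s ℓ, ∀ a ∈ S, mm ℓ ≤ (A ^ (s + ℓ)) a j := by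
    intro s ℓ a ha
    rw [pow_add, Matrix.mul_apply]
    have hz : ∀ t ∈ Finset.univ, t ∉ S → (A ^ s) a t * (A ^ ℓ) t j = 0 :=
      fun t _ ht => by rw [pow_closed h0 hcl s a ha t ht, zero_mul]
    rw [← Finset.sum_subset (Finset.subset_univ S) hz]
    calc mm ℓ = ∑ t ∈ S, (A ^ s) a t * mm ℓ := by
          rw [← Finset.sum_mul, pow_row_sum_closed h0 h1 hcl s ha, one_mul]
      _ ≤ ∑ t ∈ S, (A ^ s) a t * (A ^ ℓ) t j := by
          refine Finset.sum_le_sum fun t ht => ?_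
          exact mul_le_mul_of_nonneg_left (hmm_le ℓ t ht) (pow_entry_nonneg h0 s a t)
  have hMant : ∀ ℓ, M (ℓ + 1) ≤ M ℓ := by
    intro ℓ
    refine Finset.sup'_le _ _ fun a ha => ?_
    have := hstep_ub 1 ℓ a ha
    rwa [add_comm] at this
  have hmmmono : ∀ ℓ, mm ℓ ≤ mm (ℓ + 1) := by
    intro ℓ
    refine Finset.le_inf' _ _ fun a ha => ?_
    have := hstep_lb 1 ℓ a ha
    rwa [add_comm] at this
  -- the minimum entry of A^N over S×S
  obtain ⟨t0, ht0⟩ := id hS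
  set δ : ℝ := (S ×ˢ S).inf' (hS.product hS) (fun p => (A ^ N) p.1 p.2) with hδdef
  have hδpos : 0 < δ := by
    rw [hδdef, Finset.lt_inf'_iff]
    rintro ⟨a, b⟩ hab
    rw [Finset.mem_product] at hab
    exact hNpos a hab.1 b hab.2
  have hδle : ∀ a ∈ S, ∀ b ∈ S, δ ≤ (A ^ N) a b := by
    intro a ha b hb
    exact Finset.inf'_le (fun p => (A ^ N) p.1 p.2) (Finset.mk_mem_product ha hb)
  have hδ1 : δ ≤ 1 := (hδle t0 ht0 t0 ht0).trans (pow_entry_le_one h0 h1 N t0 t0)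
  -- contraction
  have hcontr : ∀ ℓ, M (ℓ + N) - mm (ℓ + N) ≤ (1 - δ) * (M ℓ - mm ℓ) := by
    intro ℓ
    obtain ⟨a, ha, hMa⟩ := Finset.exists_mem_eq_sup' hS (fun t => (A ^ (ℓ + N)) t j)
    obtain ⟨b, hb, hmb⟩ := Finset.exists_mem_eq_inf' hS (fun t => (A ^ (ℓ + N)) t j)
    have key : (A ^ (ℓ + N)) a j - (A ^ (ℓ + N)) b j ≤ (1 - δ) * (M ℓ - mm ℓ) := by
      have hrw : ∀ c ∈ S, (A ^ (ℓ + N)) c j = ∑ t ∈ S, (A ^ N) c t * (A ^ ℓ) t j := by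
        intro c hc
        rw [add_comm, pow_add, Matrix.mul_apply]
        refine (Finset.sum_subset (Finset.subset_univ S) fun t _ ht => ?_).symm
        rw [pow_closed h0 hcl N c hc t ht, zero_mul]
      rw [hrw a ha, hrw b hb]
      set c : Fin n → ℝ := fun t => min ((A ^ N) a t) ((A ^ N) b t) with hc
      set C : ℝ := ∑ t ∈ S, c t with hC
      have hCδ : δ ≤ C := by
        rw [hC]
        have h1t : δ ≤ c t0 := le_min (hδle a ha t0 ht0) (hδle b hb t0 ht0)
        refine h1t.trans (Finset.single_le_sum (fun t ht => ?_) ht0)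
        exact le_min (pow_entry_nonneg h0 N a t) (pow_entry_nonneg h0 N b t)
      have hsum_a : ∑ t ∈ S, ((A ^ N) a t - c t) = 1 - C := by
        rw [Finset.sum_sub_distrib, pow_row_sum_closed h0 h1 hcl N ha, hC]
      have hsum_b : ∑ t ∈ S, ((A ^ N) b t - c t) = 1 - C := by
        rw [Finset.sum_sub_distrib, pow_row_sum_closed h0 h1 hcl N hb, hC]
      have expand : ∑ t ∈ S, (A ^ N) a t * (A ^ ℓ) t j - ∑ t ∈ S, (A ^ N) b t * (A ^ ℓ) t j
          = ∑ t ∈ S, ((A ^ N) a t - c t) * (A ^ ℓ) t j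
            - ∑ t ∈ S, ((A ^ N) b t - c t) * (A ^ ℓ) t j := by
        rw [← Finset.sum_sub_distrib, ← Finset.sum_sub_distrib]
        congr 1; ext t; ring
      rw [expand]
      have hub : ∑ t ∈ S, ((A ^ N) a t - c t) * (A ^ ℓ) t j ≤ (1 - C) * M ℓ := by
        rw [← hsum_a, Finset.sum_mul]
        refine Finset.sum_le_sum fun t ht => ?_
        exact mul_le_mul_of_nonneg_left (hle_M ℓ t ht)
          (sub_nonneg.2 (min_le_left _ _))
      have hlb : (1 - C) * mm ℓ ≤ ∑ t ∈ S, ((A ^ N) b t - c t) * (A ^ ℓ) t j := by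
        rw [← hsum_b, Finset.sum_mul]
        refine Finset.sum_le_sum fun t ht => ?_
        exact mul_le_mul_of_nonneg_left (hmm_le ℓ t ht)
          (sub_nonneg.2 (min_le_right _ _))
      calc ∑ t ∈ S, ((A ^ N) a t - c t) * (A ^ ℓ) t j
            - ∑ t ∈ S, ((A ^ N) b t - c t) * (A ^ ℓ) t j
          ≤ (1 - C) * M ℓ - (1 - C) * mm ℓ := sub_le_sub hub hlb
        _ = (1 - C) * (M ℓ - mm ℓ) := by ring
        _ ≤ (1 - δ) * (M ℓ - mm ℓ) := by
            apply mul_le_mul_of_nonneg_right _ (sub_nonneg.2 (hmmM ℓ))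
            linarith
    calc M (ℓ + N) - mm (ℓ + N) = (A ^ (ℓ + N)) a j - (A ^ (ℓ + N)) b j := by
          show S.sup' hS (fun t => (A ^ (ℓ + N)) t j)
              - S.inf' hS (fun t => (A ^ (ℓ + N)) t j) = _
          rw [hMa, hmb]
      _ ≤ (1 - δ) * (M ℓ - mm ℓ) := key
  -- spread tends to zero
  have hspread : Tendsto (fun ℓ => M ℓ - mm ℓ) atTop (𝓝 0) := by
    refine geom_decay (fun ℓ => M ℓ - mm ℓ) (fun ℓ => sub_nonneg.2 (hmmM ℓ))
      (fun ℓ => sub_le_sub (hMant ℓ) (hmmmono ℓ)) N hN (1 - δ)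
      (by linarith) (by linarith) hcontr
  -- sandwich with π
  have hπM : ∀ ℓ, π j ≤ M ℓ := by
    intro ℓ
    have hz : ∀ t ∈ Finset.univ, t ∉ S → π t * (A ^ ℓ) t j = 0 :=
      fun t _ ht => by rw [hπsupp t ht, zero_mul]
    calc π j = ∑ t, π t * (A ^ ℓ) t j := (stat_pow hπst ℓ j).symm
      _ = ∑ t ∈ S, π t * (A ^ ℓ) t j :=
          (Finset.sum_subset (Finset.subset_univ S) hz).symm
      _ ≤ ∑ t ∈ S, π t * M ℓ := Finset.sum_le_sum fun t ht =>
          mul_le_mul_of_nonneg_left (hle_M ℓ t ht) (hπ0 t)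
      _ = M ℓ := by rw [← Finset.sum_mul, hπs, one_mul]
  have hπm : ∀ ℓ, mm ℓ ≤ π j := by
    intro ℓ
    have hz : ∀ t ∈ Finset.univ, t ∉ S → π t * (A ^ ℓ) t j = 0 :=
      fun t _ ht => by rw [hπsupp t ht, zero_mul]
    calc mm ℓ = ∑ t ∈ S, π t * mm ℓ := by rw [← Finset.sum_mul, hπs, one_mul]
      _ ≤ ∑ t ∈ S, π t * (A ^ ℓ) t j := Finset.sum_le_sum fun t ht =>
          mul_le_mul_of_nonneg_left (hmm_le ℓ t ht) (hπ0 t)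
      _ = ∑ t, π t * (A ^ ℓ) t j := Finset.sum_subset (Finset.subset_univ S) hz
      _ = π j := stat_pow hπst ℓ j
  have habs : ∀ ℓ, |(A ^ ℓ) i j - π j| ≤ M ℓ - mm ℓ := by
    intro ℓ
    rw [abs_sub_le_iff]
    constructor
    · linarith [hle_M ℓ i hi, hπm ℓ]
    · linarith [hmm_le ℓ i hi, hπM ℓ]
  have h0' : Tendsto (fun ℓ => (A ^ ℓ) i j - π j) atTop (𝓝 0) := by
    rw [tendsto_zero_iff_abs_tendsto_zero]
    exact squeeze_zero (fun ℓ => abs_nonneg _) habs hspread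
  have := h0'.add_const (π j)
  simpa using this
end C

/-- Theorem 2: for a row-stochastic matrix `A` with
self-confidence, with ergodic classes `E 1, …, E m` and stationary
distributions `πk k` supported on `E k`, for every state `i` the limits
`h k = lim_ℓ ∑_{j ∈ E k} (A^ℓ) i j` exist, and for every initial opinion
vector `x`, `lim_ℓ ((A^ℓ) x) i = ∑ k, h k * ∑_{j ∈ E k} πk k j * x j`. -/
theorem best_response_equilibrium
    (n : ℕ) (hn : 1 ≤ n)
    (A : Matrix (Fin n) (Fin n) ℝ)
    (hA_nonneg : ∀ i j, 0 ≤ A i j)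
    (hA_rows : ∀ i, ∑ j, A i j = 1)
    (hself : ∀ i, 0 < A i i)
    (m : ℕ) (E : Fin m → Finset (Fin n))
    (hE_class : ∀ k, ∃ i, Recurrent A i ∧
      ∀ j, j ∈ E k ↔ (Consequent A i j ∧ Consequent A j i))
    (hE_cover : ∀ i, Recurrent A i → ∃ k, i ∈ E k)
    (hE_inj : Function.Injective E)
    (πk : Fin m → Fin n → ℝ)
    (hπ_nonneg : ∀ k j, 0 ≤ πk k j)
    (hπ_sum : ∀ k, ∑ j, πk k j = 1)
    (hπ_supp : ∀ k, ∀ j ∉ E k, πk k j = 0)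
    (hπ_stat : ∀ k j, ∑ i, πk k i * A i j = πk k j) :
    ∀ i : Fin n, ∃ h : Fin m → ℝ,
      (∀ k, Tendsto (fun ℓ : ℕ => ∑ j ∈ E k, (A ^ ℓ) i j) atTop (𝓝 (h k))) ∧
      ∀ x : Fin n → ℝ,
        Tendsto (fun ℓ : ℕ => ((A ^ ℓ) *ᵥ x) i) atTop
          (𝓝 (∑ k, h k * ∑ j ∈ E k, πk k j * x j)) := by
  classical
  -- representatives of the classes
  choose rep hrep_rec hrep_mem using hE_class
  have hrepE : ∀ k, rep k ∈ E k := fun k =>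
    (hrep_mem k (rep k)).2 ⟨consequent_self hself _, consequent_self hself _⟩
  have hE_ne : ∀ k, (E k).Nonempty := fun k => ⟨rep k, hrepE k⟩
  -- each class member is recurrent
  have hmem_rec : ∀ k, ∀ j ∈ E k, Recurrent A j := by
    intro k j hj t hjt
    obtain ⟨hrj, hjr⟩ := (hrep_mem k j).1 hj
    have hrt : Consequent A (rep k) t := consequent_trans hA_nonneg hrj hjt
    have htr : Consequent A t (rep k) := hrep_rec k t hrt
    exact consequent_trans hA_nonneg htr hrj
  -- classes are closed under Consequent
  have hclosedC : ∀ k, ∀ j ∈ E k, ∀ t, Consequent A j t → t ∈ E k := by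
    intro k j hj t hjt
    obtain ⟨hrj, hjr⟩ := (hrep_mem k j).1 hj
    refine (hrep_mem k t).2 ⟨consequent_trans hA_nonneg hrj hjt, ?_⟩
    have htj : Consequent A t j := hmem_rec k j hj t hjt
    exact consequent_trans hA_nonneg htj hjr
  have hclosed : ∀ k, ∀ j ∈ E k, ∀ t ∉ E k, A j t = 0 := by
    intro k j hj t ht
    by_contra hne
    have hpos : 0 < A j t := lt_of_le_of_ne (hA_nonneg j t) (Ne.symm hne)
    exact ht (hclosedC k j hj t ⟨1, le_refl 1, by simpa using hpos⟩)
  -- classes are pairwise disjoint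
  have hdisj : ∀ k k' j, j ∈ E k → j ∈ E k' → k = k' := by
    intro k k' j hj hj'
    apply hE_inj
    obtain ⟨hrj, hjr⟩ := (hrep_mem k j).1 hj
    obtain ⟨hrj', hjr'⟩ := (hrep_mem k' j).1 hj'
    ext t
    rw [hrep_mem k t, hrep_mem k' t]
    constructor
    · rintro ⟨h1, h2⟩
      exact ⟨consequent_trans hA_nonneg (consequent_trans hA_nonneg hrj' hjr) h1,
        consequent_trans hA_nonneg h2 (consequent_trans hA_nonneg hrj hjr')⟩
    · rintro ⟨h1, h2⟩
      exact ⟨consequent_trans hA_nonneg (consequent_trans hA_nonneg hrj hjr') h1,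
        consequent_trans hA_nonneg h2 (consequent_trans hA_nonneg hrj' hjr)⟩
  -- the set of transient (non-class) states
  set T : Finset (Fin n) := Finset.univ.filter (fun j => ∀ k, j ∉ E k) with hT
  have hmemT : ∀ j, j ∈ T ↔ ∀ k, j ∉ E k := by
    intro j; simp [hT]
  have hnotT : ∀ j, j ∉ T ↔ ∃ k, j ∈ E k := by
    intro j
    rw [hmemT]
    push_neg
    rfl
  -- rows of class members vanish on T (any power)
  have hclassT : ∀ k, ∀ t ∈ E k, ∀ ℓ, ∑ j ∈ T, (A ^ ℓ) t j = 0 := by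
    intro k t ht ℓ
    refine Finset.sum_eq_zero fun j hj => ?_
    exact pow_closed hA_nonneg (hclosed k) ℓ t ht j ((hmemT j).1 hj k)
  -- transient mass
  set q : ℕ → Fin n → ℝ := fun ℓ i => ∑ j ∈ T, (A ^ ℓ) i j with hq
  have hq_nonneg : ∀ ℓ i, 0 ≤ q ℓ i := fun ℓ i =>
    Finset.sum_nonneg fun j _ => pow_entry_nonneg hA_nonneg ℓ i j
  have hq_split : ∀ s ℓ i, q (s + ℓ) i = ∑ t ∈ T, (A ^ s) i t * q ℓ t := by
    intro s ℓ i
    have : q (s + ℓ) i = ∑ t, (A ^ s) i t * q ℓ t := by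
      simp only [hq, pow_add, Matrix.mul_apply, Finset.mul_sum]
      rw [Finset.sum_comm]
    rw [this]
    refine (Finset.sum_subset (Finset.subset_univ T) fun t _ ht => ?_).symm
    obtain ⟨k, hk⟩ := (hnotT t).1 ht
    rw [hq]
    simp only
    rw [hclassT k t hk ℓ, mul_zero]
  have hq_mono : ∀ i ℓ, q (ℓ + 1) i ≤ q ℓ i := by
    intro i ℓ
    have h1 : q (ℓ + 1) i = ∑ t ∈ T, (A ^ ℓ) i t * q 1 t := hq_split ℓ 1 i
    rw [h1]
    have hq1 : ∀ t, q 1 t ≤ 1 := by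
      intro t
      have hle : (∑ j ∈ T, (A ^ 1) t j) ≤ ∑ j, (A ^ 1) t j :=
        Finset.sum_le_sum_of_subset_of_nonneg (Finset.subset_univ T)
          fun j _ _ => pow_entry_nonneg hA_nonneg 1 t j
      rw [pow_row_sum hA_rows 1 t] at hle
      simpa [hq] using hle
    calc ∑ t ∈ T, (A ^ ℓ) i t * q 1 t
        ≤ ∑ t ∈ T, (A ^ ℓ) i t * 1 := Finset.sum_le_sum fun t _ =>
          mul_le_mul_of_nonneg_left (hq1 t) (pow_entry_nonneg hA_nonneg ℓ i t)
      _ = q ℓ i := by simp [hq]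
  -- a recurrent consequent for every state
  choose rt hrt_rec hrt_con using
    fun t => exists_recurrent_consequent hA_nonneg hself (t : Fin n)
  have hrtT : ∀ t, rt t ∉ T := fun t =>
    (hnotT (rt t)).2 (hE_cover (rt t) (hrt_rec t))
  -- common power where every state reaches its recurrent consequent
  have hev : ∀ᶠ N in atTop, (1 ≤ N ∧ ∀ t, 0 < (A ^ N) t (rt t)) := by
    refine (eventually_ge_atTop 1).and ?_
    exact Filter.eventually_all.2
      fun t => consequent_eventually hA_nonneg hself (hrt_con t)
  obtain ⟨N₁, hN₁1, hN₁⟩ := hev.exists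
  -- the contraction factor for the transient mass
  have huniv_ne : (Finset.univ : Finset (Fin n)).Nonempty :=
    Finset.univ_nonempty_iff.2 (Fin.pos_iff_nonempty.1 (by omega))
  set θ : ℝ := Finset.univ.sup' huniv_ne (fun t => q N₁ t) with hθdef
  have hθ_ge : ∀ t, q N₁ t ≤ θ := fun t => Finset.le_sup' _ (Finset.mem_univ t)
  have hθ0 : 0 ≤ θ := by
    obtain ⟨t, _⟩ := huniv_ne
    exact (hq_nonneg N₁ t).trans (hθ_ge t)
  have hθ1 : θ < 1 := by
    rw [hθdef, Finset.sup'_lt_iff]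
    intro t _
    have hsub : T ⊆ Finset.univ.erase (rt t) := by
      intro j hj
      refine Finset.mem_erase.2 ⟨?_, Finset.mem_univ j⟩
      intro hje
      exact hrtT t (hje ▸ hj)
    have h2 : q N₁ t ≤ ∑ j ∈ Finset.univ.erase (rt t), (A ^ N₁) t j :=
      Finset.sum_le_sum_of_subset_of_nonneg hsub
        (fun j _ _ => pow_entry_nonneg hA_nonneg N₁ t j)
    have h3 : ∑ j ∈ Finset.univ.erase (rt t), (A ^ N₁) t j
        = 1 - (A ^ N₁) t (rt t) := by
      have := Finset.sum_erase_add Finset.univ (fun j => (A ^ N₁) t j)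
        (Finset.mem_univ (rt t))
      rw [pow_row_sum hA_rows N₁ t] at this
      linarith
    have h4 := hN₁ t
    calc q N₁ t ≤ 1 - (A ^ N₁) t (rt t) := h3 ▸ h2
      _ < 1 := by linarith
  -- geometric decay of the transient mass
  have hq_tendsto : ∀ i, Tendsto (fun ℓ => q ℓ i) atTop (𝓝 0) := by
    intro i
    refine geom_decay _ (hq_nonneg · i) (hq_mono i) N₁ (by omega) θ hθ0 hθ1 ?_
    intro ℓ
    have h1 : q (ℓ + N₁) i = ∑ t ∈ T, (A ^ ℓ) i t * q N₁ t := hq_split ℓ N₁ i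
    rw [h1]
    calc ∑ t ∈ T, (A ^ ℓ) i t * q N₁ t
        ≤ ∑ t ∈ T, (A ^ ℓ) i t * θ := Finset.sum_le_sum fun t _ =>
          mul_le_mul_of_nonneg_left (hθ_ge t) (pow_entry_nonneg hA_nonneg ℓ i t)
      _ = θ * q ℓ i := by rw [← Finset.sum_mul, hq]; ring
  -- entries towards transient states tend to zero
  have htrans_entry : ∀ i, ∀ j ∈ T, Tendsto (fun ℓ => (A ^ ℓ) i j) atTop (𝓝 0) := by
    intro i j hj
    refine squeeze_zero (fun ℓ => pow_entry_nonneg hA_nonneg ℓ i j)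
      (fun ℓ => ?_) (hq_tendsto i)
    exact Finset.single_le_sum (fun t _ => pow_entry_nonneg hA_nonneg ℓ i t) hj
  -- within-class convergence
  have hclass_entry : ∀ k, ∀ i ∈ E k, ∀ j ∈ E k,
      Tendsto (fun ℓ => (A ^ ℓ) i j) atTop (𝓝 (πk k j)) := by
    intro k i hi j hj
    have hevk : ∀ᶠ N in atTop,
        (1 ≤ N ∧ ∀ a ∈ E k, ∀ b ∈ E k, 0 < (A ^ N) a b) := by
      refine (eventually_ge_atTop 1).and ?_
      rw [eventually_all_finset]
      intro a ha
      rw [eventually_all_finset]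
      intro b hb
      obtain ⟨hra, har⟩ := (hrep_mem k a).1 ha
      obtain ⟨hrb, hbr⟩ := (hrep_mem k b).1 hb
      exact consequent_eventually hA_nonneg hself
        (consequent_trans hA_nonneg har hrb)
    obtain ⟨N, hN1, hNpos⟩ := hevk.exists
    have hπs : ∑ t ∈ E k, πk k t = 1 := by
      rw [Finset.sum_subset (Finset.subset_univ (E k))
        (fun t _ ht => hπ_supp k t ht)]
      exact hπ_sum k
    exact class_tendsto hA_nonneg hA_rows (hE_ne k) (hclosed k) (by omega)
      hNpos (πk k) (hπ_nonneg k) hπs (hπ_supp k) (hπ_stat k) hi hj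
  -- now fix the initial state i
  intro i
  set f : Fin m → ℕ → ℝ := fun k s => ∑ j ∈ E k, (A ^ s) i j with hf
  have hf_mono : ∀ k, Monotone (f k) := by
    intro k
    refine monotone_nat_of_le_succ fun s => ?_
    have h1 : f k (s + 1) = ∑ t, (A ^ s) i t * (∑ j ∈ E k, A t j) := by
      simp only [hf, pow_succ, Matrix.mul_apply, Finset.mul_sum]
      rw [Finset.sum_comm]
    rw [h1]
    have h2 : f k s = ∑ t ∈ E k, (A ^ s) i t * (∑ j ∈ E k, A t j) := by
      refine Finset.sum_congr rfl fun t ht => ?_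
      have : ∑ j ∈ E k, A t j = 1 := by
        rw [Finset.sum_subset (Finset.subset_univ (E k))
          (fun j _ hj => hclosed k t ht j hj)]
        exact hA_rows t
      rw [this, mul_one]
    rw [h2]
    refine Finset.sum_le_sum_of_subset_of_nonneg (Finset.subset_univ (E k))
      (fun t _ _ => mul_nonneg (pow_entry_nonneg hA_nonneg s i t) ?_)
    exact Finset.sum_nonneg fun j _ => hA_nonneg t j
  have hf_le_one : ∀ k s, f k s ≤ 1 := by
    intro k s
    have hle : f k s ≤ ∑ j, (A ^ s) i j :=
      Finset.sum_le_sum_of_subset_of_nonneg (Finset.subset_univ (E k))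
        fun j _ _ => pow_entry_nonneg hA_nonneg s i j
    rw [pow_row_sum hA_rows s i] at hle
    exact hle
  set h : Fin m → ℝ := fun k => ⨆ s, f k s with hh
  have hf_tendsto : ∀ k, Tendsto (f k) atTop (𝓝 (h k)) := by
    intro k
    exact tendsto_atTop_ciSup (hf_mono k) ⟨1, fun y ⟨s, hs⟩ => hs ▸ hf_le_one k s⟩
  -- the mixed limit for entries towards class states
  have hπ_le_one : ∀ k j, πk k j ≤ 1 := by
    intro k j
    calc πk k j ≤ ∑ t, πk k t :=
      Finset.single_le_sum (fun t _ => hπ_nonneg k t) (Finset.mem_univ j)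
    _ = 1 := hπ_sum k
  have hcross : ∀ k, ∀ j ∈ E k,
      Tendsto (fun ℓ => (A ^ ℓ) i j) atTop (𝓝 (h k * πk k j)) := by
    intro k j hj
    rw [Metric.tendsto_atTop]
    intro ε hε
    have hε3 : 0 < ε / 3 := by linarith
    -- choose s with both f and q close
    have hev1 : ∀ᶠ s in atTop, |f k s - h k| < ε / 3 ∧ q s i < ε / 3 := by
      have e1 : ∀ᶠ s in atTop, |f k s - h k| < ε / 3 := by
        have := (hf_tendsto k)
        rw [Metric.tendsto_atTop] at this
        obtain ⟨M, hM⟩ := this (ε / 3) hε3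
        filter_upwards [eventually_ge_atTop M] with s hs
        simpa [Real.dist_eq] using hM s hs
      have e2 : ∀ᶠ s in atTop, q s i < ε / 3 := by
        have := hq_tendsto i
        rw [Metric.tendsto_atTop] at this
        obtain ⟨M, hM⟩ := this (ε / 3) hε3
        filter_upwards [eventually_ge_atTop M] with s hs
        have := hM s hs
        rw [Real.dist_eq, abs_sub_lt_iff] at this
        linarith [this.1]
      exact e1.and e2
    obtain ⟨s, hfs, hqs⟩ := hev1.exists
    -- choose L after which all class entries are close to π
    have hev2 : ∀ᶠ ℓ in atTop, ∀ t ∈ E k, |(A ^ ℓ) t j - πk k j| < ε / 3 := by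
      rw [eventually_all_finset]
      intro t ht
      have := hclass_entry k t ht j hj
      rw [Metric.tendsto_atTop] at this
      obtain ⟨M, hM⟩ := this (ε / 3) hε3
      filter_upwards [eventually_ge_atTop M] with ℓ hℓ
      simpa [Real.dist_eq] using hM ℓ hℓ
    obtain ⟨L, hL⟩ := (eventually_atTop.1 hev2)
    refine ⟨s + L, fun M hM => ?_⟩
    set u : ℕ := M - s with hu
    have hMeq : M = s + u := by omega
    have huL : L ≤ u := by omega
    -- decompose the entry
    have hdecomp : (A ^ M) i j
        = ∑ t ∈ E k, (A ^ s) i t * (A ^ u) t j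
          + ∑ t ∈ T, (A ^ s) i t * (A ^ u) t j := by
      rw [hMeq, pow_add, Matrix.mul_apply]
      rw [← Finset.sum_union ?hd]
      case hd =>
        rw [Finset.disjoint_left]
        intro a ha haT
        exact ((hmemT a).1 haT) k ha
      refine (Finset.sum_subset (Finset.subset_univ _) fun t _ ht => ?_).symm
      rw [Finset.mem_union, not_or] at ht
      obtain ⟨k', hk'⟩ := (hnotT t).1 ht.2
      have hkk' : k' ≠ k := fun hc => ht.1 (hc ▸ hk')
      have hjk' : j ∉ E k' := fun hc => hkk' (hdisj k' k j hc hj)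
      rw [pow_closed hA_nonneg (hclosed k') u t hk' j hjk', mul_zero]
    have hfπ : ∑ t ∈ E k, (A ^ s) i t * πk k j = f k s * πk k j := by
      rw [← Finset.sum_mul]
    have e1 : ∑ t ∈ E k, (A ^ s) i t * ((A ^ u) t j - πk k j)
        = (∑ t ∈ E k, (A ^ s) i t * (A ^ u) t j) - f k s * πk k j := by
      simp only [mul_sub]
      rw [Finset.sum_sub_distrib, ← Finset.sum_mul]
    have key : (A ^ M) i j - h k * πk k j
        = (∑ t ∈ E k, (A ^ s) i t * ((A ^ u) t j - πk k j))
          + (∑ t ∈ T, (A ^ s) i t * (A ^ u) t j)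
          + (f k s - h k) * πk k j := by
      rw [hdecomp, e1]; ring
    rw [Real.dist_eq, key]
    set X := ∑ t ∈ E k, (A ^ s) i t * ((A ^ u) t j - πk k j) with hX
    set Y := ∑ t ∈ T, (A ^ s) i t * (A ^ u) t j with hY
    set Z := (f k s - h k) * πk k j with hZ
    have hXb : |X| ≤ ε / 3 := by
      calc |X| ≤ ∑ t ∈ E k, |(A ^ s) i t * ((A ^ u) t j - πk k j)| :=
          Finset.abs_sum_le_sum_abs _ _
        _ ≤ ∑ t ∈ E k, (A ^ s) i t * (ε / 3) := by
            refine Finset.sum_le_sum fun t ht => ?_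
            rw [abs_mul, abs_of_nonneg (pow_entry_nonneg hA_nonneg s i t)]
            exact mul_le_mul_of_nonneg_left (le_of_lt (hL u huL t ht))
              (pow_entry_nonneg hA_nonneg s i t)
        _ = f k s * (ε / 3) := by rw [← Finset.sum_mul]
        _ ≤ 1 * (ε / 3) := by
            exact mul_le_mul_of_nonneg_right (hf_le_one k s) (by linarith)
        _ = ε / 3 := one_mul _
    have hYb : |Y| ≤ q s i := by
      rw [abs_of_nonneg (Finset.sum_nonneg fun t _ =>
        mul_nonneg (pow_entry_nonneg hA_nonneg s i t)
          (pow_entry_nonneg hA_nonneg u t j))]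
      calc Y ≤ ∑ t ∈ T, (A ^ s) i t * 1 := Finset.sum_le_sum fun t _ =>
            mul_le_mul_of_nonneg_left (pow_entry_le_one hA_nonneg hA_rows u t j)
              (pow_entry_nonneg hA_nonneg s i t)
        _ = q s i := by simp [hq]
    have hZb : |Z| ≤ |f k s - h k| := by
      rw [hZ, abs_mul]
      calc |f k s - h k| * |πk k j| ≤ |f k s - h k| * 1 := by
            refine mul_le_mul_of_nonneg_left ?_ (abs_nonneg _)
            rw [abs_of_nonneg (hπ_nonneg k j)]
            exact hπ_le_one k j
        _ = |f k s - h k| := mul_one _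
    calc |X + Y + Z| ≤ |X + Y| + |Z| := abs_add_le _ _
      _ ≤ |X| + |Y| + |Z| := by linarith [abs_add_le X Y]
      _ < ε := by linarith
  -- conclusion
  refine ⟨h, fun k => ?_, fun x => ?_⟩
  · exact hf_tendsto k
  · set c : Fin n → ℝ :=
      fun j => ∑ k, if j ∈ E k then h k * πk k j * x j else 0 with hc
    have hentry : ∀ j, Tendsto (fun ℓ => (A ^ ℓ) i j * x j) atTop (𝓝 (c j)) := by
      intro j
      by_cases hjT : j ∈ T
      · have hc0 : c j = 0 := by
          rw [hc]
          exact Finset.sum_eq_zero fun k _ => if_neg ((hmemT j).1 hjT k)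
        rw [hc0]
        have := (htrans_entry i j hjT).mul_const (x j)
        simpa using this
      · obtain ⟨k, hk⟩ := (hnotT j).1 hjT
        have hcj : c j = h k * πk k j * x j := by
          simp only [hc]
          rw [Finset.sum_eq_single_of_mem k (Finset.mem_univ k)]
          · exact if_pos hk
          · intro k' _ hk'
            refine if_neg fun hc' => hk' (hdisj k' k j hc' hk)
        rw [hcj]
        have := (hcross k j hk).mul_const (x j)
        exact this
    have hsum := tendsto_finset_sum Finset.univ (fun j _ => hentry j)
    have heq : ∑ j, c j = ∑ k, h k * ∑ j ∈ E k, πk k j * x j := by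
      simp only [hc]
      rw [Finset.sum_comm]
      refine Finset.sum_congr rfl fun k _ => ?_
      rw [Finset.sum_ite_mem, Finset.univ_inter, Finset.mul_sum]
      exact Finset.sum_congr rfl fun j _ => by ring
    rw [← heq]
    refine hsum.congr fun ℓ => ?_
    simp [Matrix.mulVec, dotProduct]
end

section
/- Limit of matrix powers toward an ergodic class: assume A has self-confidence, let E be an ergodic class of A, and let π : Fin n → ℝ be a stationary distribution of A supported on E (π_j ≥ 0, Σ_j π_j = 1, π_j = 0 for j ∉ E, and Σ_i π_i A_{ij} = π_j for all j). Then for every state i and every j ∈ E, lim_{ℓ→∞} (A^ℓ)_{ij} = h_i^E · π_j, where h_i^E := lim_{n→∞} Σ_{j'∈E} (A^n)_{ij'} (this limit exists). -/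
open Finset Filter Topology Matrix

namespace ProofAux
variable {n : ℕ} (A : Matrix (Fin n) (Fin n) ℝ)
lemma pow_nonneg (hA : ∀ i j, 0 ≤ A i j) (ℓ : ℕ) (i j : Fin n) :
    0 ≤ (A ^ ℓ) i j := by
  induction ℓ generalizing i j with
  | zero =>
      rw [pow_zero]
      by_cases h : i = j <;> simp [Matrix.one_apply, h]
  | succ ℓ ih =>
      rw [pow_succ, Matrix.mul_apply]
      exact Finset.sum_nonneg fun k _ => mul_nonneg (ih i k) (hA k j)
lemma pow_rowsum (hrow : ∀ i, ∑ j, A i j = 1) (ℓ : ℕ) (i : Fin n) :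
    ∑ j, (A ^ ℓ) i j = 1 := by
  induction ℓ generalizing i with
  | zero => simp [Matrix.one_apply]
  | succ ℓ ih =>
      simp only [pow_succ, Matrix.mul_apply]
      rw [Finset.sum_comm]
      simp_rw [← Finset.mul_sum, hrow, mul_one]
      exact ih i
lemma pow_le_one (hA : ∀ i j, 0 ≤ A i j) (hrow : ∀ i, ∑ j, A i j = 1)
    (ℓ : ℕ) (i j : Fin n) : (A ^ ℓ) i j ≤ 1 := by
  rw [← pow_rowsum A hrow ℓ i]
  exact Finset.single_le_sum (fun k _ => pow_nonneg A hA ℓ i k) (Finset.mem_univ j)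
lemma chain (hA : ∀ i j, 0 ≤ A i j) (a b : ℕ) (x y z : Fin n) :
    (A ^ a) x y * (A ^ b) y z ≤ (A ^ (a + b)) x z := by
  rw [pow_add, Matrix.mul_apply]
  exact Finset.single_le_sum (f := fun k => (A ^ a) x k * (A ^ b) k z)
    (fun k _ => mul_nonneg (pow_nonneg A hA a x k) (pow_nonneg A hA b k z))
    (Finset.mem_univ y)
lemma conseq_trans (hA : ∀ i j, 0 ≤ A i j) {x y z : Fin n} :
    Consequent A x y → Consequent A y z → Consequent A x z := by
  rintro ⟨a, ha1, ha⟩ ⟨b, hb1, hb⟩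
  exact ⟨a + b, by omega, lt_of_lt_of_le (mul_pos ha hb) (chain A hA a b x y z)⟩
lemma pos_mono (hA : ∀ i j, 0 ≤ A i j) (hself : ∀ i, 0 < A i i)
    {k j : Fin n} {m : ℕ} (h : 0 < (A ^ m) k j) (d : ℕ) :
    0 < (A ^ (m + d)) k j := by
  induction d with
  | zero => simpa using h
  | succ d ih =>
      have hc := chain A hA (m + d) 1 k j j
      rw [pow_one] at hc
      exact lt_of_lt_of_le (mul_pos ih (hself j)) hc
end ProofAux

/-- for a row-stochastic matrix `A` with self-confidence, an
ergodic class `E` and a stationary distribution `π` supported on `E`, for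
every state `i` the limit `hE = lim_ℓ ∑_{j' ∈ E} (A^ℓ) i j'` exists and
`lim_ℓ (A^ℓ) i j = hE * π j` for every `j ∈ E`. -/
theorem matrix_power_limit_ergodic_class
    (n : ℕ) (hn : 1 ≤ n)
    (A : Matrix (Fin n) (Fin n) ℝ)
    (hA_nonneg : ∀ i j, 0 ≤ A i j)
    (hA_rows : ∀ i, ∑ j, A i j = 1)
    (hself : ∀ i, 0 < A i i)
    (E : Finset (Fin n))
    (hE_class : ∃ i, Recurrent A i ∧
      ∀ j, j ∈ E ↔ (Consequent A i j ∧ Consequent A j i))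
    (π : Fin n → ℝ)
    (hπ_nonneg : ∀ j, 0 ≤ π j)
    (hπ_sum : ∑ j, π j = 1)
    (hπ_supp : ∀ j ∉ E, π j = 0)
    (hπ_stat : ∀ j, ∑ i, π i * A i j = π j) :
    ∀ i : Fin n, ∃ hE : ℝ,
      Tendsto (fun ℓ : ℕ => ∑ j' ∈ E, (A ^ ℓ) i j') atTop (𝓝 hE) ∧
      ∀ j ∈ E, Tendsto (fun ℓ : ℕ => (A ^ ℓ) i j) atTop (𝓝 (hE * π j)) := by
  obtain ⟨i₀, hrec, hEc⟩ := hE_class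
  have hi₀c : Consequent A i₀ i₀ := ⟨1, le_refl 1, by simpa using hself i₀⟩
  have hi₀E : i₀ ∈ E := (hEc i₀).2 ⟨hi₀c, hi₀c⟩
  have hEne : E.Nonempty := ⟨i₀, hi₀E⟩
  -- E is closed
  have hclosed : ∀ j ∈ E, ∀ k, k ∉ E → A j k = 0 := by
    intro j hj k hk
    by_contra hne
    have hpos : 0 < A j k := lt_of_le_of_ne (hA_nonneg j k) (Ne.symm hne)
    have h1 : Consequent A j k := ⟨1, le_refl 1, by simpa using hpos⟩
    have h2 : Consequent A i₀ k := ProofAux.conseq_trans A hA_nonneg ((hEc j).1 hj).1 h1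
    exact hk ((hEc k).2 ⟨h2, hrec k h2⟩)
  have hclosedpow : ∀ ℓ, ∀ j ∈ E, ∀ k, k ∉ E → (A ^ ℓ) j k = 0 := by
    intro ℓ
    induction ℓ with
    | zero =>
        intro j hj k hk
        rw [pow_zero, Matrix.one_apply_ne]
        rintro rfl; exact hk hj
    | succ ℓ ih =>
        intro j hj k hk
        rw [pow_succ', Matrix.mul_apply]
        apply Finset.sum_eq_zero
        intro y _
        by_cases hy : y ∈ E
        · rw [ih y hy k hk, mul_zero]
        · rw [hclosed j hj y hy, zero_mul]
  have hrowE : ∀ ℓ, ∀ j ∈ E, ∑ k ∈ E, (A ^ ℓ) j k = 1 := by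
    intro ℓ j hj
    rw [← ProofAux.pow_rowsum A hA_rows ℓ j]
    exact Finset.sum_subset (Finset.subset_univ E)
      (fun k _ hk => hclosedpow ℓ j hj k hk)
  -- uniform positivity time m
  obtain ⟨m, hmpos⟩ : ∃ m, ∀ k ∈ E, ∀ j ∈ E, 0 < (A ^ m) k j := by
    have hcons : ∀ k ∈ E, ∀ j ∈ E, ∃ q, 1 ≤ q ∧ 0 < (A ^ q) k j := by
      intro k hk j hj
      exact ProofAux.conseq_trans A hA_nonneg ((hEc k).1 hk).2 ((hEc j).1 hj).1
    choose! f hf1 hf2 using hcons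
    refine ⟨(E ×ˢ E).sup (fun p => f p.1 p.2) + 1, ?_⟩
    intro k hk j hj
    have hle : f k j ≤ (E ×ˢ E).sup (fun p => f p.1 p.2) + 1 := by
      have h0 : f k j ≤ (E ×ˢ E).sup (fun p => f p.1 p.2) :=
        Finset.le_sup (f := fun p : Fin n × Fin n => f p.1 p.2)
          (Finset.mk_mem_product hk hj)
      omega
    obtain ⟨d, hd⟩ := Nat.exists_eq_add_of_le hle
    rw [hd]
    exact ProofAux.pos_mono A hA_nonneg hself (hf2 k hk j hj) d
  have hEEne : (E ×ˢ E).Nonempty := hEne.product hEne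
  set δ : ℝ := (E ×ˢ E).inf' hEEne (fun p => (A ^ m) p.1 p.2) with hδdef
  have hδpos : 0 < δ := by
    rw [hδdef, Finset.lt_inf'_iff]
    intro p hp
    obtain ⟨h1, h2⟩ := Finset.mem_product.1 hp
    exact hmpos p.1 h1 p.2 h2
  have hδle : ∀ k ∈ E, ∀ j ∈ E, δ ≤ (A ^ m) k j := by
    intro k hk j hj
    exact Finset.inf'_le _ (Finset.mk_mem_product hk hj)
  -- convergence of (A^ℓ) k j to π j for k, j in E
  have hconv : ∀ j ∈ E, ∀ k ∈ E,
      Tendsto (fun ℓ : ℕ => (A ^ ℓ) k j) atTop (𝓝 (π j)) := by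
    intro j hj
    set Ms : ℕ → ℝ := fun ℓ => E.sup' hEne (fun k => (A ^ ℓ) k j) with hMsdef
    set ms : ℕ → ℝ := fun ℓ => E.inf' hEne (fun k => (A ^ ℓ) k j) with hmsdef
    have hle_Ms : ∀ ℓ, ∀ k ∈ E, (A ^ ℓ) k j ≤ Ms ℓ := by
      intro ℓ k hk
      simp only [hMsdef]
      exact Finset.le_sup' (fun k => (A ^ ℓ) k j) hk
    have hms_le : ∀ ℓ, ∀ k ∈ E, ms ℓ ≤ (A ^ ℓ) k j := by
      intro ℓ k hk
      simp only [hmsdef]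
      exact Finset.inf'_le (fun k => (A ^ ℓ) k j) hk
    have hMstep : ∀ (ℓ : ℕ) (a : ℝ), (∀ k ∈ E, (A ^ ℓ) k j ≤ a) → Ms ℓ ≤ a := by
      intro ℓ a ha
      simp only [hMsdef]
      exact Finset.sup'_le _ (fun k => (A ^ ℓ) k j) ha
    have hmstep : ∀ (ℓ : ℕ) (a : ℝ), (∀ k ∈ E, a ≤ (A ^ ℓ) k j) → a ≤ ms ℓ := by
      intro ℓ a ha
      simp only [hmsdef]
      exact Finset.le_inf' _ (fun k => (A ^ ℓ) k j) ha
    have hMs_attain : ∀ ℓ, ∃ k ∈ E, Ms ℓ = (A ^ ℓ) k j := by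
      intro ℓ
      simp only [hMsdef]
      exact Finset.exists_mem_eq_sup' hEne (fun k => (A ^ ℓ) k j)
    have hms_attain : ∀ ℓ, ∃ k ∈ E, ms ℓ = (A ^ ℓ) k j := by
      intro ℓ
      simp only [hmsdef]
      exact Finset.exists_mem_eq_inf' hEne (fun k => (A ^ ℓ) k j)
    have hmsMs : ∀ ℓ, ms ℓ ≤ Ms ℓ := fun ℓ =>
      le_trans (hms_le ℓ i₀ hi₀E) (hle_Ms ℓ i₀ hi₀E)
    have hdec : ∀ p ℓ, ∀ k ∈ E,
        (A ^ (p + ℓ)) k j = ∑ k' ∈ E, (A ^ p) k k' * (A ^ ℓ) k' j := by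
      intro p ℓ k hk
      rw [pow_add, Matrix.mul_apply]
      exact (Finset.sum_subset (Finset.subset_univ E)
        (fun k' _ hk' => by rw [hclosedpow p k hk k' hk', zero_mul])).symm
    have hboundU : ∀ p ℓ, ∀ k ∈ E, (A ^ (p + ℓ)) k j ≤ Ms ℓ := by
      intro p ℓ k hk
      rw [hdec p ℓ k hk]
      calc ∑ k' ∈ E, (A ^ p) k k' * (A ^ ℓ) k' j
          ≤ ∑ k' ∈ E, (A ^ p) k k' * Ms ℓ :=
            Finset.sum_le_sum fun k' hk' =>
              mul_le_mul_of_nonneg_left (hle_Ms ℓ k' hk')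
                (ProofAux.pow_nonneg A hA_nonneg p k k')
        _ = Ms ℓ := by rw [← Finset.sum_mul, hrowE p k hk, one_mul]
    have hboundL : ∀ p ℓ, ∀ k ∈ E, ms ℓ ≤ (A ^ (p + ℓ)) k j := by
      intro p ℓ k hk
      rw [hdec p ℓ k hk]
      calc ms ℓ = ∑ k' ∈ E, (A ^ p) k k' * ms ℓ := by
            rw [← Finset.sum_mul, hrowE p k hk, one_mul]
        _ ≤ ∑ k' ∈ E, (A ^ p) k k' * (A ^ ℓ) k' j :=
            Finset.sum_le_sum fun k' hk' =>
              mul_le_mul_of_nonneg_left (hms_le ℓ k' hk')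
                (ProofAux.pow_nonneg A hA_nonneg p k k')
    have hMant : Antitone Ms := antitone_nat_of_succ_le fun ℓ => by
      apply hMstep
      intro k hk
      have := hboundU 1 ℓ k hk
      rwa [Nat.add_comm] at this
    have hmmono : Monotone ms := monotone_nat_of_le_succ fun ℓ => by
      apply hmstep
      intro k hk
      have := hboundL 1 ℓ k hk
      rwa [Nat.add_comm] at this
    -- contraction
    have hcontr : ∀ ℓ, Ms (m + ℓ) - ms (m + ℓ) ≤ (1 - δ) * (Ms ℓ - ms ℓ) := by
      intro ℓ
      obtain ⟨k₀, hk₀E, hk₀⟩ := hms_attain ℓ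
      obtain ⟨k₁, hk₁E, hk₁⟩ := hMs_attain ℓ
      have hub : ∀ k ∈ E, (A ^ (m + ℓ)) k j ≤ Ms ℓ - δ * (Ms ℓ - ms ℓ) := by
        intro k hk
        rw [hdec m ℓ k hk]
        have hsplit : ∑ k' ∈ E, (A ^ m) k k' * (A ^ ℓ) k' j
            = (A ^ m) k k₀ * (A ^ ℓ) k₀ j
              + ∑ k' ∈ E.erase k₀, (A ^ m) k k' * (A ^ ℓ) k' j :=
          (Finset.add_sum_erase E (fun k' => (A ^ m) k k' * (A ^ ℓ) k' j) hk₀E).symm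
        have h2 : ∑ k' ∈ E.erase k₀, (A ^ m) k k' = 1 - (A ^ m) k k₀ := by
          have ha : (A ^ m) k k₀ + ∑ k' ∈ E.erase k₀, (A ^ m) k k' = ∑ k' ∈ E, (A ^ m) k k' :=
            Finset.add_sum_erase E (fun k' => (A ^ m) k k') hk₀E
          have hb := hrowE m k hk
          linarith
        have hrest : ∑ k' ∈ E.erase k₀, (A ^ m) k k' * (A ^ ℓ) k' j
            ≤ (1 - (A ^ m) k k₀) * Ms ℓ := by
          calc ∑ k' ∈ E.erase k₀, (A ^ m) k k' * (A ^ ℓ) k' j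
              ≤ ∑ k' ∈ E.erase k₀, (A ^ m) k k' * Ms ℓ :=
                Finset.sum_le_sum fun k' hk' =>
                  mul_le_mul_of_nonneg_left (hle_Ms ℓ k' (Finset.mem_of_mem_erase hk'))
                    (ProofAux.pow_nonneg A hA_nonneg m k k')
            _ = (1 - (A ^ m) k k₀) * Ms ℓ := by rw [← Finset.sum_mul, h2]
        have hδk : δ ≤ (A ^ m) k k₀ := hδle k hk k₀ hk₀E
        rw [hsplit, ← hk₀]
        nlinarith [mul_nonneg (sub_nonneg.2 hδk) (sub_nonneg.2 (hmsMs ℓ))]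
      have hlb : ∀ k ∈ E, ms ℓ + δ * (Ms ℓ - ms ℓ) ≤ (A ^ (m + ℓ)) k j := by
        intro k hk
        rw [hdec m ℓ k hk]
        have hsplit : ∑ k' ∈ E, (A ^ m) k k' * (A ^ ℓ) k' j
            = (A ^ m) k k₁ * (A ^ ℓ) k₁ j
              + ∑ k' ∈ E.erase k₁, (A ^ m) k k' * (A ^ ℓ) k' j :=
          (Finset.add_sum_erase E (fun k' => (A ^ m) k k' * (A ^ ℓ) k' j) hk₁E).symm
        have h2 : ∑ k' ∈ E.erase k₁, (A ^ m) k k' = 1 - (A ^ m) k k₁ := by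
          have ha : (A ^ m) k k₁ + ∑ k' ∈ E.erase k₁, (A ^ m) k k' = ∑ k' ∈ E, (A ^ m) k k' :=
            Finset.add_sum_erase E (fun k' => (A ^ m) k k') hk₁E
          have hb := hrowE m k hk
          linarith
        have hrest : (1 - (A ^ m) k k₁) * ms ℓ
            ≤ ∑ k' ∈ E.erase k₁, (A ^ m) k k' * (A ^ ℓ) k' j := by
          calc (1 - (A ^ m) k k₁) * ms ℓ
              = ∑ k' ∈ E.erase k₁, (A ^ m) k k' * ms ℓ := by rw [← Finset.sum_mul, h2]
            _ ≤ ∑ k' ∈ E.erase k₁, (A ^ m) k k' * (A ^ ℓ) k' j :=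
                Finset.sum_le_sum fun k' hk' =>
                  mul_le_mul_of_nonneg_left (hms_le ℓ k' (Finset.mem_of_mem_erase hk'))
                    (ProofAux.pow_nonneg A hA_nonneg m k k')
        have hδk : δ ≤ (A ^ m) k k₁ := hδle k hk k₁ hk₁E
        rw [hsplit, ← hk₁]
        nlinarith [mul_nonneg (sub_nonneg.2 hδk) (sub_nonneg.2 (hmsMs ℓ))]
      have hub' : Ms (m + ℓ) ≤ Ms ℓ - δ * (Ms ℓ - ms ℓ) := hMstep _ _ hub
      have hlb' : ms ℓ + δ * (Ms ℓ - ms ℓ) ≤ ms (m + ℓ) := hmstep _ _ hlb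
      nlinarith [mul_nonneg hδpos.le (sub_nonneg.2 (hmsMs ℓ))]
    -- limits
    have hDant : Antitone (fun ℓ => Ms ℓ - ms ℓ) := fun a b hab =>
      sub_le_sub (hMant hab) (hmmono hab)
    have hD0 : ∀ ℓ, 0 ≤ Ms ℓ - ms ℓ := fun ℓ => sub_nonneg.2 (hmsMs ℓ)
    have hDbdd : BddBelow (Set.range (fun ℓ => Ms ℓ - ms ℓ)) :=
      ⟨0, by rintro x ⟨ℓ, rfl⟩; exact hD0 ℓ⟩
    have hDconv : Tendsto (fun ℓ => Ms ℓ - ms ℓ) atTop (𝓝 (⨅ ℓ, Ms ℓ - ms ℓ)) :=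
      tendsto_atTop_ciInf hDant hDbdd
    set d := ⨅ ℓ, Ms ℓ - ms ℓ with hddef
    have hd0 : 0 ≤ d := le_ciInf hD0
    have hd_eq : d = 0 := by
      have heq : (fun ℓ => Ms (m + ℓ) - ms (m + ℓ))
          = ((fun ℓ => Ms ℓ - ms ℓ) ∘ fun ℓ => ℓ + m) := by
        funext ℓ
        simp [Nat.add_comm]
      have h1 : Tendsto (fun ℓ => Ms (m + ℓ) - ms (m + ℓ)) atTop (𝓝 d) := by
        rw [heq]
        exact hDconv.comp (tendsto_add_atTop_nat m)
      have h2 : Tendsto (fun ℓ => (1 - δ) * (Ms ℓ - ms ℓ)) atTop (𝓝 ((1 - δ) * d)) :=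
        hDconv.const_mul _
      have h3 : d ≤ (1 - δ) * d := le_of_tendsto_of_tendsto' h1 h2 hcontr
      nlinarith
    have hMbdd : BddBelow (Set.range Ms) :=
      ⟨ms 0, by rintro x ⟨ℓ, rfl⟩; exact le_trans (hmmono (Nat.zero_le ℓ)) (hmsMs ℓ)⟩
    have hMconv : Tendsto Ms atTop (𝓝 (⨅ ℓ, Ms ℓ)) := tendsto_atTop_ciInf hMant hMbdd
    set L := ⨅ ℓ, Ms ℓ with hLdef
    have hmconv : Tendsto ms atTop (𝓝 L) := by
      have h1 : Tendsto (fun ℓ => Ms ℓ - (Ms ℓ - ms ℓ)) atTop (𝓝 (L - d)) :=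
        hMconv.sub hDconv
      simpa [hd_eq, sub_sub_cancel] using h1
    have hkconv : ∀ k ∈ E, Tendsto (fun ℓ : ℕ => (A ^ ℓ) k j) atTop (𝓝 L) :=
      fun k hk => tendsto_of_tendsto_of_tendsto_of_le_of_le hmconv hMconv
        (fun ℓ => hms_le ℓ k hk) (fun ℓ => hle_Ms ℓ k hk)
    -- identify the limit with π j
    have hstatpow : ∀ ℓ (q : Fin n), ∑ k, π k * (A ^ ℓ) k q = π q := by
      intro ℓ
      induction ℓ with
      | zero => intro q; simp [Matrix.one_apply]
      | succ ℓ ih =>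
          intro q
          simp only [pow_succ, Matrix.mul_apply, Finset.mul_sum]
          rw [Finset.sum_comm]
          simp_rw [← mul_assoc, ← Finset.sum_mul, ih]
          exact hπ_stat q
    have hEπ : ∑ k ∈ E, π k = 1 := by
      rw [← hπ_sum]
      exact Finset.sum_subset (Finset.subset_univ E) (fun k _ hk => hπ_supp k hk)
    have hstatE : ∀ ℓ : ℕ, ∑ k ∈ E, π k * (A ^ ℓ) k j = π j := by
      intro ℓ
      rw [← hstatpow ℓ j]
      exact Finset.sum_subset (Finset.subset_univ E)
        (fun k _ hk => by rw [hπ_supp k hk, zero_mul])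
    have hsumconv : Tendsto (fun ℓ : ℕ => ∑ k ∈ E, π k * (A ^ ℓ) k j) atTop
        (𝓝 (∑ k ∈ E, π k * L)) :=
      tendsto_finset_sum E (fun k hk => (hkconv k hk).const_mul (π k))
    have hLπ : L = π j := by
      have hfun : (fun ℓ : ℕ => ∑ k ∈ E, π k * (A ^ ℓ) k j) = fun _ => π j :=
        funext hstatE
      have hconst : Tendsto (fun ℓ : ℕ => ∑ k ∈ E, π k * (A ^ ℓ) k j) atTop (𝓝 (π j)) := by
        rw [hfun]
        exact tendsto_const_nhds
      have huni := tendsto_nhds_unique hsumconv hconst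
      rw [← Finset.sum_mul, hEπ, one_mul] at huni
      exact huni
    intro k hk
    rw [← hLπ]
    exact hkconv k hk
  -- main part
  intro i
  have hπle1 : ∀ q, π q ≤ 1 := by
    intro q
    rw [← hπ_sum]
    exact Finset.single_le_sum (fun k _ => hπ_nonneg k) (Finset.mem_univ q)
  set S : ℕ → ℝ := fun ℓ => ∑ j' ∈ E, (A ^ ℓ) i j' with hSdef
  have hSsucc : ∀ ℓ, S ℓ ≤ S (ℓ + 1) := by
    intro ℓ
    have hrw : S (ℓ + 1) = ∑ k, (A ^ ℓ) i k * (∑ j' ∈ E, A k j') := by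
      simp only [hSdef, pow_succ, Matrix.mul_apply]
      rw [Finset.sum_comm]
      simp_rw [Finset.mul_sum]
    rw [hrw]
    have h1 : S ℓ = ∑ k ∈ E, (A ^ ℓ) i k * (∑ j' ∈ E, A k j') := by
      simp only [hSdef]
      apply Finset.sum_congr rfl
      intro k hk
      have : ∑ j' ∈ E, A k j' = 1 := by
        have := hrowE 1 k hk
        simpa [pow_one] using this
      rw [this, mul_one]
    rw [h1]
    apply Finset.sum_le_sum_of_subset_of_nonneg (Finset.subset_univ E)
    intro k _ _
    exact mul_nonneg (ProofAux.pow_nonneg A hA_nonneg ℓ i k)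
      (Finset.sum_nonneg fun j' _ => hA_nonneg k j')
  have hSmono : Monotone S := monotone_nat_of_le_succ hSsucc
  have hSle1 : ∀ ℓ, S ℓ ≤ 1 := by
    intro ℓ
    rw [← ProofAux.pow_rowsum A hA_rows ℓ i]
    exact Finset.sum_le_sum_of_subset_of_nonneg (Finset.subset_univ E)
      (fun k _ _ => ProofAux.pow_nonneg A hA_nonneg ℓ i k)
  have hSbdd : BddAbove (Set.range S) := ⟨1, by rintro x ⟨ℓ, rfl⟩; exact hSle1 ℓ⟩
  have hStend : Tendsto S atTop (𝓝 (⨆ ℓ, S ℓ)) := tendsto_atTop_ciSup hSmono hSbdd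
  set hlim := ⨆ ℓ, S ℓ with hhdef
  have hSleh : ∀ ℓ, S ℓ ≤ hlim := fun ℓ => le_ciSup hSbdd ℓ
  refine ⟨hlim, hStend, ?_⟩
  intro j hj
  -- T s : total deviation on E
  set T : ℕ → ℝ := fun s => ∑ k ∈ E, |(A ^ s) k j - π j| with hTdef
  have hTconv : Tendsto T atTop (𝓝 0) := by
    have h1 := tendsto_finset_sum E
      (fun k hk => ((hconv j hj k hk).sub (tendsto_const_nhds (x := π j))).abs)
    simpa using h1
  have hT0 : ∀ s, 0 ≤ T s := fun s => Finset.sum_nonneg fun k _ => abs_nonneg _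
  -- key estimate
  have hkey : ∀ ℓ s : ℕ, |(A ^ (ℓ + s)) i j - hlim * π j| ≤ T s + 2 * (hlim - S ℓ) := by
    intro ℓ s
    have hdecomp : (A ^ (ℓ + s)) i j
        = (∑ k ∈ E, (A ^ ℓ) i k * (A ^ s) k j) + ∑ k ∈ Eᶜ, (A ^ ℓ) i k * (A ^ s) k j := by
      rw [pow_add, Matrix.mul_apply, ← Finset.sum_add_sum_compl E]
    set a1 := ∑ k ∈ E, (A ^ ℓ) i k * (A ^ s) k j with ha1def
    set R := ∑ k ∈ Eᶜ, (A ^ ℓ) i k * (A ^ s) k j with hRdef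
    have ha1 : |a1 - S ℓ * π j| ≤ T s := by
      have heq : a1 - S ℓ * π j = ∑ k ∈ E, (A ^ ℓ) i k * ((A ^ s) k j - π j) := by
        simp only [ha1def, hSdef, mul_sub, Finset.sum_sub_distrib, Finset.sum_mul]
      rw [heq]
      calc |∑ k ∈ E, (A ^ ℓ) i k * ((A ^ s) k j - π j)|
          ≤ ∑ k ∈ E, |(A ^ ℓ) i k * ((A ^ s) k j - π j)| := Finset.abs_sum_le_sum_abs _ _
        _ ≤ ∑ k ∈ E, |(A ^ s) k j - π j| := by
            apply Finset.sum_le_sum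
            intro k _
            rw [abs_mul, abs_of_nonneg (ProofAux.pow_nonneg A hA_nonneg ℓ i k)]
            exact mul_le_of_le_one_left (abs_nonneg _)
              (ProofAux.pow_le_one A hA_nonneg hA_rows ℓ i k)
        _ = T s := rfl
    have hRnn : 0 ≤ R := Finset.sum_nonneg fun k _ =>
      mul_nonneg (ProofAux.pow_nonneg A hA_nonneg ℓ i k)
        (ProofAux.pow_nonneg A hA_nonneg s k j)
    have hRub : R ≤ hlim - S ℓ := by
      have hSsplit : S (ℓ + s)
          = (∑ k ∈ E, (A ^ ℓ) i k * (∑ j' ∈ E, (A ^ s) k j'))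
            + ∑ k ∈ Eᶜ, (A ^ ℓ) i k * (∑ j' ∈ E, (A ^ s) k j') := by
        have h0 : S (ℓ + s) = ∑ k, (A ^ ℓ) i k * (∑ j' ∈ E, (A ^ s) k j') := by
          simp only [hSdef, pow_add, Matrix.mul_apply]
          rw [Finset.sum_comm]
          simp_rw [Finset.mul_sum]
        rw [h0, ← Finset.sum_add_sum_compl E]
      have hfirst : ∑ k ∈ E, (A ^ ℓ) i k * (∑ j' ∈ E, (A ^ s) k j') = S ℓ := by
        simp only [hSdef]
        apply Finset.sum_congr rfl
        intro k hk
        rw [hrowE s k hk, mul_one]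
      have hR2 : R ≤ ∑ k ∈ Eᶜ, (A ^ ℓ) i k * (∑ j' ∈ E, (A ^ s) k j') := by
        apply Finset.sum_le_sum
        intro k _
        apply mul_le_mul_of_nonneg_left _ (ProofAux.pow_nonneg A hA_nonneg ℓ i k)
        exact Finset.single_le_sum
          (fun j' _ => ProofAux.pow_nonneg A hA_nonneg s k j') hj
      have hfin : ∑ k ∈ Eᶜ, (A ^ ℓ) i k * (∑ j' ∈ E, (A ^ s) k j')
          = S (ℓ + s) - S ℓ := by
        rw [hSsplit, hfirst]
        ring
      rw [hfin] at hR2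
      have := hSleh (ℓ + s)
      linarith
    have hiden : (A ^ (ℓ + s)) i j - hlim * π j
        = (a1 - S ℓ * π j) + (S ℓ - hlim) * π j + R := by
      rw [hdecomp]
      ring
    have habs : |(A ^ (ℓ + s)) i j - hlim * π j|
        ≤ |a1 - S ℓ * π j| + |(S ℓ - hlim) * π j| + |R| := by
      rw [hiden]
      exact abs_add_three _ _ _
    have h2 : |(S ℓ - hlim) * π j| = (hlim - S ℓ) * π j := by
      rw [abs_mul, abs_of_nonneg (hπ_nonneg j), abs_of_nonpos (by linarith [hSleh ℓ])]
      ring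
    have h3 : (hlim - S ℓ) * π j ≤ hlim - S ℓ :=
      mul_le_of_le_one_right (by linarith [hSleh ℓ]) (hπle1 j)
    rw [h2, abs_of_nonneg hRnn] at habs
    linarith
  -- epsilon argument
  rw [Metric.tendsto_atTop]
  intro ε hε
  obtain ⟨L₀, hL₀⟩ : ∃ L₀, hlim - S L₀ < ε / 4 := by
    obtain ⟨N, hN⟩ := Metric.tendsto_atTop.1 hStend (ε / 4) (by positivity)
    have := hN N le_rfl
    rw [Real.dist_eq] at this
    exact ⟨N, by cases abs_lt.1 this; linarith⟩
  obtain ⟨S₀, hS₀⟩ := Metric.tendsto_atTop.1 hTconv (ε / 2) (by positivity)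
  refine ⟨L₀ + S₀, fun mt hmt => ?_⟩
  have hTs := hS₀ (mt - L₀) (by omega)
  rw [Real.dist_eq, sub_zero] at hTs
  have hk := hkey L₀ (mt - L₀)
  rw [show L₀ + (mt - L₀) = mt from by omega] at hk
  rw [Real.dist_eq]
  have hTle : T (mt - L₀) ≤ |T (mt - L₀)| := le_abs_self _
  linarith
end

section
/- Consensus within an ergodic class: assume A is irreducible (every state is a consequent of every state) and has self-confidence, and let π : Fin n → ℝ be a stationary distribution of A (π_j ≥ 0, Σ_j π_j = 1, Σ_i π_i A_{ij} = π_j for all j). Then lim_{ℓ→∞} (A^ℓ)_{ij} = π_j for all i, j; consequently, for every initial opinion vector x : Fin n → ℝ and every state i, lim_{ℓ→∞} ((A^ℓ)x)_i = Σ_j π_j x_j, so all agents reach the same limiting opinion (a consensus). -/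
open Finset Filter Topology Matrix

section aux
variable {n : ℕ} (A : Matrix (Fin n) (Fin n) ℝ)

lemma pow_nonneg' (h : ∀ i j, 0 ≤ A i j) : ∀ m i j, 0 ≤ (A ^ m) i j := by
  intro m
  induction m with
  | zero => intro i j; simp [Matrix.one_apply]; split <;> norm_num
  | succ m ih =>
      intro i j
      rw [pow_succ, Matrix.mul_apply]
      exact Finset.sum_nonneg fun k _ => mul_nonneg (ih i k) (h k j)

lemma pow_rows' (h : ∀ i, ∑ j, A i j = 1) : ∀ m i, ∑ j, (A ^ m) i j = 1 := by
  intro m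
  induction m with
  | zero => intro i; simp [Matrix.one_apply]
  | succ m ih =>
      intro i
      simp only [pow_succ, Matrix.mul_apply]
      rw [Finset.sum_comm]
      calc ∑ k, ∑ j, (A ^ m) i k * A k j
          = ∑ k, (A ^ m) i k * ∑ j, A k j := by
            refine Finset.sum_congr rfl fun k _ => ?_
            rw [Finset.mul_sum]
        _ = 1 := by simp [h, ih i]

lemma pos_persist (hnn : ∀ i j, 0 ≤ A i j) (hself : ∀ i, 0 < A i i) :
    ∀ m m', m ≤ m' → ∀ i j, 0 < (A ^ m) i j → 0 < (A ^ m') i j := by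
  have hpownn := pow_nonneg' A hnn
  intro m m' hle
  induction m' , hle using Nat.le_induction with
  | base => intro i j h; exact h
  | succ m' hm ih =>
      intro i j h
      have h1 : 0 < A i i * (A ^ m') i j := mul_pos (hself i) (ih i j h)
      have h2 : A i i * (A ^ m') i j ≤ ∑ k, A i k * (A ^ m') k j :=
        Finset.single_le_sum (fun k _ => mul_nonneg (hnn i k) (hpownn m' k j)) (Finset.mem_univ i)
      rw [pow_succ', Matrix.mul_apply]
      exact lt_of_lt_of_le h1 h2

lemma exists_pos_pow (hn : 1 ≤ n) (hnn : ∀ i j, 0 ≤ A i j) (hself : ∀ i, 0 < A i i)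
    (hirr : ∀ i j, ∃ m : ℕ, 1 ≤ m ∧ 0 < (A ^ m) i j) :
    ∃ M : ℕ, 1 ≤ M ∧ ∀ i j, 0 < (A ^ M) i j := by
  choose m hm1 hmpos using hirr
  have hne : Nonempty (Fin n) := Fin.pos_iff_nonempty.mp hn
  refine ⟨Finset.univ.sup (fun p : Fin n × Fin n => m p.1 p.2), ?_, ?_⟩
  · obtain ⟨i⟩ := hne
    exact le_trans (hm1 i i) (Finset.le_sup (f := fun p : Fin n × Fin n => m p.1 p.2) (Finset.mem_univ (i, i)))
  · intro i j
    exact pos_persist A hnn hself _ _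
      (Finset.le_sup (Finset.mem_univ (i, j))) i j (hmpos i j)
end aux

/-- Consensus within an ergodic class: if `A` is irreducible,
row-stochastic and has self-confidence, and `π` is a stationary distribution
of `A`, then `(A^ℓ) i j → π j` for all `i, j`, and consequently for every
initial opinion vector `x` and state `i`, `((A^ℓ) x) i → ∑ j, π j * x j`:
all agents reach the same limiting opinion. -/
theorem consensus_irreducible
    (n : ℕ) (hn : 1 ≤ n)
    (A : Matrix (Fin n) (Fin n) ℝ)
    (hA_nonneg : ∀ i j, 0 ≤ A i j)
    (hA_rows : ∀ i, ∑ j, A i j = 1)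
    (hself : ∀ i, 0 < A i i)
    (hirr : ∀ i j, Consequent A i j)
    (π : Fin n → ℝ)
    (hπ_nonneg : ∀ j, 0 ≤ π j)
    (hπ_sum : ∑ j, π j = 1)
    (hπ_stat : ∀ j, ∑ i, π i * A i j = π j) :
    (∀ i j, Tendsto (fun ℓ : ℕ => (A ^ ℓ) i j) atTop (𝓝 (π j))) ∧
    (∀ x : Fin n → ℝ, ∀ i,
      Tendsto (fun ℓ : ℕ => ((A ^ ℓ) *ᵥ x) i) atTop (𝓝 (∑ j, π j * x j))) := by
  have hne : Nonempty (Fin n) := Fin.pos_iff_nonempty.mp hn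
  have hU : (Finset.univ : Finset (Fin n)).Nonempty := Finset.univ_nonempty
  have hpownn := pow_nonneg' A hA_nonneg
  have hpowrows := pow_rows' A hA_rows
  obtain ⟨M, hM1, hMpos⟩ := exists_pos_pow A hn hA_nonneg hself hirr
  set B := A ^ M with hB
  -- δ : minimal entry of B
  have hUP : ((Finset.univ : Finset (Fin n)) ×ˢ Finset.univ).Nonempty := hU.product hU
  set δ := ((Finset.univ : Finset (Fin n)) ×ˢ Finset.univ).inf' hUP (fun p => B p.1 p.2) with hδ
  have hδpos : 0 < δ := by
    rw [hδ, Finset.lt_inf'_iff]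
    exact fun p _ => hMpos p.1 p.2
  have hδle : ∀ i j, δ ≤ B i j := by
    intro i j
    exact Finset.inf'_le (f := fun p : Fin n × Fin n => B p.1 p.2) (b := (i, j))
      (Finset.mem_product.mpr ⟨Finset.mem_univ i, Finset.mem_univ j⟩)
  set c : ℝ := 1 - n * δ with hc
  have hcnn : 0 ≤ c := by
    have hone : (1:ℝ) = ∑ j, B hU.choose j := (hpowrows M hU.choose).symm
    have : (n : ℝ) * δ ≤ ∑ j, B hU.choose j := by
      calc (n:ℝ) * δ = ∑ _j : Fin n, δ := by
            rw [Finset.sum_const, Finset.card_univ, Fintype.card_fin, nsmul_eq_mul]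
        _ ≤ ∑ j, B hU.choose j := Finset.sum_le_sum fun j _ => hδle _ j
    rw [hc]; linarith [hone ▸ this]
  have hclt : c < 1 := by
    have : 0 < (n:ℝ) * δ := by
      have : (0:ℝ) < n := by exact_mod_cast hn
      positivity
    rw [hc]; linarith
  -- generic sup'/inf' facts
  have sup_bd : ∀ (v : Fin n → ℝ) i, v i ≤ Finset.univ.sup' hU v :=
    fun v i => Finset.le_sup' v (Finset.mem_univ i)
  have inf_bd : ∀ (v : Fin n → ℝ) i, Finset.univ.inf' hU v ≤ v i :=
    fun v i => Finset.inf'_le v (Finset.mem_univ i)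
  -- one-step monotonicity: for any row-stochastic nonneg matrix C, (C *ᵥ v) stays within bounds
  have step_le : ∀ (C : Matrix (Fin n) (Fin n) ℝ), (∀ i j, 0 ≤ C i j) → (∀ i, ∑ j, C i j = 1) →
      ∀ (v : Fin n → ℝ) i, (C *ᵥ v) i ≤ Finset.univ.sup' hU v := by
    intro C hCnn hCr v i
    have : (C *ᵥ v) i = ∑ k, C i k * v k := by
      simp [Matrix.mulVec, dotProduct]
    rw [this]
    calc ∑ k, C i k * v k ≤ ∑ k, C i k * Finset.univ.sup' hU v :=
          Finset.sum_le_sum fun k _ => mul_le_mul_of_nonneg_left (sup_bd v k) (hCnn i k)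
      _ = Finset.univ.sup' hU v := by rw [← Finset.sum_mul, hCr i, one_mul]
  have step_ge : ∀ (C : Matrix (Fin n) (Fin n) ℝ), (∀ i j, 0 ≤ C i j) → (∀ i, ∑ j, C i j = 1) →
      ∀ (v : Fin n → ℝ) i, Finset.univ.inf' hU v ≤ (C *ᵥ v) i := by
    intro C hCnn hCr v i
    have : (C *ᵥ v) i = ∑ k, C i k * v k := by
      simp [Matrix.mulVec, dotProduct]
    rw [this]
    calc Finset.univ.inf' hU v = ∑ k, C i k * Finset.univ.inf' hU v := by
          rw [← Finset.sum_mul, hCr i, one_mul]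
      _ ≤ ∑ k, C i k * v k :=
          Finset.sum_le_sum fun k _ => mul_le_mul_of_nonneg_left (inf_bd v k) (hCnn i k)
  -- contraction by B
  have hBnn : ∀ i j, 0 ≤ B i j := fun i j => hpownn M i j
  have hBr : ∀ i, ∑ j, B i j = 1 := hpowrows M
  have contract : ∀ (v : Fin n → ℝ),
      Finset.univ.sup' hU (B *ᵥ v) - Finset.univ.inf' hU (B *ᵥ v)
        ≤ c * (Finset.univ.sup' hU v - Finset.univ.inf' hU v) := by
    intro v
    set S := Finset.univ.sup' hU v
    set I := Finset.univ.inf' hU v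
    have hup : ∀ i, (B *ᵥ v) i ≤ c * S + δ * ∑ k, v k := by
      intro i
      have he : (B *ᵥ v) i = ∑ k, (B i k - δ) * v k + δ * ∑ k, v k := by
        simp [Matrix.mulVec, dotProduct, sub_mul, Finset.sum_sub_distrib, Finset.mul_sum]
      rw [he]
      have h1 : ∑ k, (B i k - δ) * v k ≤ ∑ k, (B i k - δ) * S :=
        Finset.sum_le_sum fun k _ => mul_le_mul_of_nonneg_left (sup_bd v k)
          (by linarith [hδle i k])
      have h2 : ∑ k, (B i k - δ) * S = c * S := by
        rw [← Finset.sum_mul]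
        congr 1
        rw [Finset.sum_sub_distrib, hBr i, Finset.sum_const, Finset.card_univ,
          Fintype.card_fin, nsmul_eq_mul, hc]
      linarith [h1.trans_eq h2]
    have hdown : ∀ i, c * I + δ * ∑ k, v k ≤ (B *ᵥ v) i := by
      intro i
      have he : (B *ᵥ v) i = ∑ k, (B i k - δ) * v k + δ * ∑ k, v k := by
        simp [Matrix.mulVec, dotProduct, sub_mul, Finset.sum_sub_distrib, Finset.mul_sum]
      rw [he]
      have h1 : ∑ k, (B i k - δ) * I ≤ ∑ k, (B i k - δ) * v k :=
        Finset.sum_le_sum fun k _ => mul_le_mul_of_nonneg_left (inf_bd v k)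
          (by linarith [hδle i k])
      have h2 : ∑ k, (B i k - δ) * I = c * I := by
        rw [← Finset.sum_mul]
        congr 1
        rw [Finset.sum_sub_distrib, hBr i, Finset.sum_const, Finset.card_univ,
          Fintype.card_fin, nsmul_eq_mul, hc]
      linarith [h2 ▸ h1]
    have hS' : Finset.univ.sup' hU (B *ᵥ v) ≤ c * S + δ * ∑ k, v k :=
      Finset.sup'_le _ _ fun i _ => hup i
    have hI' : c * I + δ * ∑ k, v k ≤ Finset.univ.inf' hU (B *ᵥ v) :=
      Finset.le_inf' _ _ fun i _ => hdown i
    have : c * (S - I) = (c * S + δ * ∑ k, v k) - (c * I + δ * ∑ k, v k) := by ring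
    linarith
  ------------------------------------------------------------------
  -- main column argument
  have main : ∀ i j, Tendsto (fun ℓ : ℕ => (A ^ ℓ) i j) atTop (𝓝 (π j)) := by
    intro i₀ j
    set f : ℕ → Fin n → ℝ := fun ℓ i => (A ^ ℓ) i j with hf
    have hstep : ∀ ℓ, f (ℓ + 1) = A *ᵥ f ℓ := by
      intro ℓ
      funext i
      simp only [hf, pow_succ', Matrix.mul_apply, Matrix.mulVec, dotProduct]
    have hstepM : ∀ ℓ, f (ℓ + M) = B *ᵥ f ℓ := by
      intro ℓ
      funext i
      have : A ^ (ℓ + M) = B * A ^ ℓ := by rw [hB, ← pow_add, Nat.add_comm]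
      simp only [hf, this, Matrix.mul_apply, Matrix.mulVec, dotProduct]
    set S : ℕ → ℝ := fun ℓ => Finset.univ.sup' hU (f ℓ) with hS
    set I : ℕ → ℝ := fun ℓ => Finset.univ.inf' hU (f ℓ) with hI
    set D : ℕ → ℝ := fun ℓ => S ℓ - I ℓ with hD
    have hDnn : ∀ ℓ, 0 ≤ D ℓ := fun ℓ => by
      have := (inf_bd (f ℓ) hU.choose).trans (sup_bd (f ℓ) hU.choose)
      simp only [hD]; linarith
    have hanti : Antitone D := by
      refine antitone_nat_of_succ_le fun ℓ => ?_
      have h1 : S (ℓ + 1) ≤ S ℓ := by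
        refine Finset.sup'_le _ _ fun i _ => ?_
        rw [show f (ℓ+1) i = (A *ᵥ f ℓ) i from by rw [hstep ℓ]]
        exact step_le A hA_nonneg hA_rows (f ℓ) i
      have h2 : I ℓ ≤ I (ℓ + 1) := by
        refine Finset.le_inf' _ _ fun i _ => ?_
        rw [show f (ℓ+1) i = (A *ᵥ f ℓ) i from by rw [hstep ℓ]]
        exact step_ge A hA_nonneg hA_rows (f ℓ) i
      simp only [hD]; linarith
    have hgeo : ∀ ℓ, D (ℓ + M) ≤ c * D ℓ := by
      intro ℓ
      have := contract (f ℓ)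
      rw [← hstepM ℓ] at this
      exact this
    have hiter : ∀ k, D (M * k) ≤ c ^ k * D 0 := by
      intro k
      induction k with
      | zero => simp
      | succ k ih =>
          have : D (M * k + M) ≤ c * D (M * k) := hgeo (M * k)
          have h2 : c * D (M * k) ≤ c * (c ^ k * D 0) :=
            mul_le_mul_of_nonneg_left ih hcnn
          calc D (M * (k + 1)) = D (M * k + M) := by ring_nf
            _ ≤ c * (c ^ k * D 0) := this.trans h2
            _ = c ^ (k + 1) * D 0 := by ring
    have hbound : ∀ ℓ, D ℓ ≤ c ^ (ℓ / M) * D 0 := by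
      intro ℓ
      exact (hanti (Nat.mul_div_le ℓ M)).trans (hiter (ℓ / M))
    have hdiv : Tendsto (fun ℓ : ℕ => ℓ / M) atTop atTop := by
      refine tendsto_atTop.2 fun b => ?_
      filter_upwards [eventually_ge_atTop (b * M)] with ℓ hℓ
      exact (Nat.le_div_iff_mul_le (by omega)).mpr hℓ
    have hg0 : Tendsto (fun ℓ : ℕ => c ^ (ℓ / M) * D 0) atTop (𝓝 0) := by
      have := (tendsto_pow_atTop_nhds_zero_of_lt_one hcnn hclt).comp hdiv
      simpa using this.mul_const (D 0)
    have hD0 : Tendsto D atTop (𝓝 0) := squeeze_zero hDnn hbound hg0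
    -- π j sits between I ℓ and S ℓ
    have hstat_pow : ∀ ℓ j', ∑ i, π i * (A ^ ℓ) i j' = π j' := by
      intro ℓ
      induction ℓ with
      | zero => intro j'; simp [Matrix.one_apply]
      | succ ℓ ih =>
          intro j'
          have : ∀ i, (A ^ (ℓ+1)) i j' = ∑ k, (A ^ ℓ) i k * A k j' := by
            intro i; rw [pow_succ, Matrix.mul_apply]
          simp only [this, Finset.mul_sum]
          rw [Finset.sum_comm]
          calc ∑ k, ∑ i, π i * ((A ^ ℓ) i k * A k j')
              = ∑ k, (∑ i, π i * (A ^ ℓ) i k) * A k j' := by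
                refine Finset.sum_congr rfl fun k _ => ?_
                rw [Finset.sum_mul]
                exact Finset.sum_congr rfl fun i _ => by ring
            _ = π j' := by
                simp only [ih]
                exact hπ_stat j'
    have hπbound : ∀ ℓ, I ℓ ≤ π j ∧ π j ≤ S ℓ := by
      intro ℓ
      have heq : π j = ∑ i, π i * f ℓ i := (hstat_pow ℓ j).symm
      constructor
      · rw [heq]
        calc I ℓ = ∑ i, π i * I ℓ := by rw [← Finset.sum_mul, hπ_sum, one_mul]
          _ ≤ ∑ i, π i * f ℓ i :=
            Finset.sum_le_sum fun i _ => mul_le_mul_of_nonneg_left (inf_bd (f ℓ) i) (hπ_nonneg i)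
      · rw [heq]
        calc ∑ i, π i * f ℓ i ≤ ∑ i, π i * S ℓ :=
            Finset.sum_le_sum fun i _ => mul_le_mul_of_nonneg_left (sup_bd (f ℓ) i) (hπ_nonneg i)
          _ = S ℓ := by rw [← Finset.sum_mul, hπ_sum, one_mul]
    have habs : ∀ ℓ, ‖f ℓ i₀ - π j‖ ≤ D ℓ := by
      intro ℓ
      obtain ⟨h1, h2⟩ := hπbound ℓ
      have h3 := inf_bd (f ℓ) i₀
      have h4 := sup_bd (f ℓ) i₀
      rw [Real.norm_eq_abs, abs_le]
      constructor <;> simp only [hD] <;> linarith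
    have hz : Tendsto (fun ℓ => f ℓ i₀ - π j) atTop (𝓝 0) :=
      squeeze_zero_norm habs hD0
    have := hz.add (tendsto_const_nhds (x := π j))
    simpa using this
  refine ⟨main, ?_⟩
  intro x i
  have : ∀ ℓ : ℕ, ((A ^ ℓ) *ᵥ x) i = ∑ j, (A ^ ℓ) i j * x j := by
    intro ℓ; simp [Matrix.mulVec, dotProduct]
  simp only [this]
  exact tendsto_finset_sum _ fun j _ => (main i j).mul_const (x j)
end
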